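/- arXiv:1710.06367 — 4 statements merged into one kernel-verified Lean document; each statement's English description precedes it below -/
import Mathlib

section
/- Let H be a directed m-uniform hypergraph on n vertices with m even, let A_H⁺ be its out-adjacency hypermatrix, and let B be the order-m dimension-n hypermatrix with b_{i₁…i_m} = |T_e|/m! if i₁,…,i_m are distinct and {v_{i₁},…,v_{i_m}} = T_e ∪ H_e for some edge e ∈ E, and b_{i₁…i_m} = 0 otherwise. Then the maximum Z-eigenvalue of A_H⁺ is less than or equal to the maximum Z-eigenvalue of B. -/
open Finset

/-- `(A x^{m-1})_i` for a real order-`m` dimension-`n` hypermatrix `A`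
and a real vector `x`. -/
noncomputable def hmApply {m n : ℕ} (hm : 0 < m) (A : (Fin m → Fin n) → ℝ)
    (x : Fin n → ℝ) (i : Fin n) : ℝ :=
  ∑ f ∈ Finset.univ.filter (fun f : Fin m → Fin n => f ⟨0, hm⟩ = i),
    A f * ∏ j ∈ Finset.univ.filter (fun j : Fin m => j ≠ ⟨0, hm⟩), x (f j)

/-- `(A x^{m-1})_i` for a real hypermatrix `A` and a complex vector `x`. -/
noncomputable def hmApplyC {m n : ℕ} (hm : 0 < m) (A : (Fin m → Fin n) → ℝ)
    (x : Fin n → ℂ) (i : Fin n) : ℂ :=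
  ∑ f ∈ Finset.univ.filter (fun f : Fin m → Fin n => f ⟨0, hm⟩ = i),
    (A f : ℂ) * ∏ j ∈ Finset.univ.filter (fun j : Fin m => j ≠ ⟨0, hm⟩), x (f j)

/-- `A x^m`, the homogeneous form associated with a hypermatrix. -/
noncomputable def formEval {m n : ℕ} (A : (Fin m → Fin n) → ℝ) (x : Fin n → ℝ) : ℝ :=
  ∑ f : Fin m → Fin n, A f * ∏ j, x (f j)

/-- `lam ∈ ℂ` is an eigenvalue of `A`:  there is a nonzero complex vector `x` with
`(A x^{m-1})_i = lam * x_i^{m-1}` for all `i`. -/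
def IsEigenvalue {m n : ℕ} (hm : 0 < m) (A : (Fin m → Fin n) → ℝ) (lam : ℂ) : Prop :=
  ∃ x : Fin n → ℂ, x ≠ 0 ∧ ∀ i, hmApplyC hm A x i = lam * (x i) ^ (m - 1)

/-- `(lam, x)` is an H-eigenpair of `A` (both real). -/
def IsHEigenpair {m n : ℕ} (hm : 0 < m) (A : (Fin m → Fin n) → ℝ)
    (lam : ℝ) (x : Fin n → ℝ) : Prop :=
  x ≠ 0 ∧ ∀ i, hmApply hm A x i = lam * (x i) ^ (m - 1)

/-- `(lam, x)` is a Z-eigenpair of `A`:  `A x^{m-1} = lam x` and `∑ x_i² = 1`. -/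
def IsZEigenpair {m n : ℕ} (hm : 0 < m) (A : (Fin m → Fin n) → ℝ)
    (lam : ℝ) (x : Fin n → ℝ) : Prop :=
  (∀ i, hmApply hm A x i = lam * x i) ∧ ∑ i, (x i) ^ 2 = 1

/-- The spectral radius of `A`: the largest modulus of an eigenvalue. -/
noncomputable def specRad {m n : ℕ} (hm : 0 < m) (A : (Fin m → Fin n) → ℝ) : ℝ :=
  sSup {r : ℝ | ∃ lam : ℂ, IsEigenvalue hm A lam ∧ r = ‖lam‖}

/-- The largest Z-eigenvalue of `A`. -/
noncomputable def zMax {m n : ℕ} (hm : 0 < m) (A : (Fin m → Fin n) → ℝ) : ℝ :=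
  sSup {lam : ℝ | ∃ x : Fin n → ℝ, IsZEigenpair hm A lam x}

/-- `A` is copositive: `A x^m ≥ 0` for every entrywise nonnegative real `x`. -/
def Copositive {m n : ℕ} (A : (Fin m → Fin n) → ℝ) : Prop :=
  ∀ x : Fin n → ℝ, (∀ i, 0 ≤ x i) → 0 ≤ formEval A x

/-- A directed hypergraph on vertex set `Fin n`: each edge is a pair
(tail, head) of disjoint nonempty vertex sets, and distinct edges have
distinct vertex sets. -/
structure DirHypergraph (n : ℕ) where
  edges : Finset (Finset (Fin n) × Finset (Fin n))
  tail_nonempty : ∀ e ∈ edges, e.1.Nonempty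
  head_nonempty : ∀ e ∈ edges, e.2.Nonempty
  tail_head_disjoint : ∀ e ∈ edges, Disjoint e.1 e.2
  union_injective : ∀ e ∈ edges, ∀ e' ∈ edges, e.1 ∪ e.2 = e'.1 ∪ e'.2 → e = e'

namespace DirHypergraph

variable {n : ℕ}

/-- `H` is `m`-uniform. -/
def IsUniform (H : DirHypergraph n) (m : ℕ) : Prop :=
  ∀ e ∈ H.edges, (e.1 ∪ e.2).card = m

/-- `H` is non-uniform: it has two edges of different cardinalities. -/
def NonUniform (H : DirHypergraph n) : Prop :=
  ∃ e ∈ H.edges, ∃ e' ∈ H.edges, (e.1 ∪ e.2).card ≠ (e'.1 ∪ e'.2).card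

/-- `m = m.c.e.(H)`, the maximum cardinality of an edge (the rank of `H`). -/
def mce (H : DirHypergraph n) (m : ℕ) : Prop :=
  (∀ e ∈ H.edges, (e.1 ∪ e.2).card ≤ m) ∧ ∃ e ∈ H.edges, (e.1 ∪ e.2).card = m

/-- `c = corank(H)`, the minimum cardinality of an edge. -/
def corank (H : DirHypergraph n) (c : ℕ) : Prop :=
  (∀ e ∈ H.edges, c ≤ (e.1 ∪ e.2).card) ∧ ∃ e ∈ H.edges, (e.1 ∪ e.2).card = c

end DirHypergraph

variable {n : ℕ}

/-- Out-degree of a vertex. -/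
def outDeg (H : DirHypergraph n) (v : Fin n) : ℕ :=
  (H.edges.filter (fun e => v ∈ e.1)).card

/-- In-degree of a vertex. -/
def inDeg (H : DirHypergraph n) (v : Fin n) : ℕ :=
  (H.edges.filter (fun e => v ∈ e.2)).card

/-- Degree of a vertex in the underlying undirected hypergraph. -/
def undDeg (H : DirHypergraph n) (v : Fin n) : ℕ :=
  (H.edges.filter (fun e => v ∈ e.1 ∪ e.2)).card

/-- The maximum out-degree `Δ⁺`. -/
noncomputable def maxOutDeg (H : DirHypergraph n) : ℝ :=
  sSup (Set.range fun v => (outDeg H v : ℝ))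

/-- The minimum out-degree `δ⁺`. -/
noncomputable def minOutDeg (H : DirHypergraph n) : ℝ :=
  sInf (Set.range fun v => (outDeg H v : ℝ))

/-- The out-adjacency hypermatrix of a directed `m`-uniform hypergraph:
the entry at the tuple `f = (i₁, …, i_m)` is `1/((m-k)!(k-1)!)` when, for some
edge `e` with `k = |T_e|`, the first `k` indices are exactly the distinct
elements of `T_e` and the last `m - k` indices are exactly the distinct
elements of `H_e`; all other entries are zero. -/
noncomputable def outAdj (m : ℕ) (H : DirHypergraph n) (f : Fin m → Fin n) : ℝ :=
  ∑ e ∈ H.edges,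
    if ((Finset.univ.filter fun j : Fin m => (j : ℕ) < e.1.card).image f = e.1 ∧
        (Finset.univ.filter fun j : Fin m => e.1.card ≤ (j : ℕ)).image f = e.2)
    then (1 : ℝ) / ((((m - e.1.card).factorial * (e.1.card - 1).factorial : ℕ)) : ℝ)
    else 0

/-- The in-adjacency hypermatrix of a directed `m`-uniform hypergraph. -/
noncomputable def inAdj (m : ℕ) (H : DirHypergraph n) (f : Fin m → Fin n) : ℝ :=
  ∑ e ∈ H.edges,
    if ((Finset.univ.filter fun j : Fin m => (j : ℕ) < m - e.1.card).image f = e.2 ∧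
        (Finset.univ.filter fun j : Fin m => m - e.1.card ≤ (j : ℕ)).image f = e.1)
    then (1 : ℝ) / ((((m - e.1.card - 1).factorial * (e.1.card).factorial : ℕ)) : ℝ)
    else 0

/-- The adjacency hypermatrix of the underlying undirected hypergraph `H_D`. -/
noncomputable def undAdj (m : ℕ) (H : DirHypergraph n) (f : Fin m → Fin n) : ℝ :=
  ∑ e ∈ H.edges,
    if (Function.Injective f ∧ Finset.univ.image f = e.1 ∪ e.2)
    then (1 : ℝ) / (((m - 1).factorial : ℕ) : ℝ)
    else 0

/-- The supersymmetric hypermatrix `B` with `b_{i₁…i_m} = |T_e|/m!` whenever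
`i₁, …, i_m` are distinct and `{i₁, …, i_m} = T_e ∪ H_e` for an edge `e`. -/
noncomputable def symB (m : ℕ) (H : DirHypergraph n) (f : Fin m → Fin n) : ℝ :=
  ∑ e ∈ H.edges,
    if (Function.Injective f ∧ Finset.univ.image f = e.1 ∪ e.2)
    then (e.1.card : ℝ) / (m.factorial : ℝ)
    else 0

/-- The order-`m` diagonal hypermatrix with diagonal entries `d`. -/
noncomputable def diagHM (m : ℕ) (d : Fin n → ℝ) (f : Fin m → Fin n) : ℝ :=
  ∑ i : Fin n, if f = (fun _ => i) then d i else 0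

/-- The normalizing constant `α` in the definition of the out-adjacency
hypermatrix of a general (non-uniform) directed hypergraph, for an edge with
tail of size `k` and `s` vertices in total, inside a rank-`m` hypergraph. -/
def alphaVal (m k s : ℕ) : ℕ :=
  ∑ r ∈ Finset.range (m - s + 1),
    (∑ t ∈ (Finset.Nat.antidiagonalTuple k (r + k)).filter (fun t => ∀ i, 1 ≤ t i),
        Nat.multinomial Finset.univ t) *
    (∑ t ∈ (Finset.Nat.antidiagonalTuple (s - k) (m - k - r)).filter (fun t => ∀ i, 1 ≤ t i),
        Nat.multinomial Finset.univ t)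

/-- The out-adjacency hypermatrix of a general directed (non-uniform)
hypergraph of rank `m`:  the entry at `f = (p₁, …, p_m)` is `k/α` when for some
edge `e` (with `|T_e| = k`, `|T_e ∪ H_e| = s`) and some `t` with
`k ≤ t ≤ m - s + k`, the first `t` indices all lie in `T_e`, covering it, and
the remaining indices all lie in `H_e`, covering it; other entries are zero. -/
noncomputable def outAdjNU (m : ℕ) (H : DirHypergraph n) (f : Fin m → Fin n) : ℝ :=
  ∑ e ∈ H.edges,
    ∑ t ∈ Finset.Icc e.1.card (m - (e.1.card + e.2.card) + e.1.card),
      if ((Finset.univ.filter fun j : Fin m => (j : ℕ) < t).image f = e.1 ∧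
          (Finset.univ.filter fun j : Fin m => t ≤ (j : ℕ)).image f = e.2)
      then (e.1.card : ℝ) / (alphaVal m e.1.card (e.1.card + e.2.card) : ℝ)
      else 0


lemma card_filter_univ_image_eq {α β : Type*} [Fintype α] [DecidableEq α] [Fintype β] [DecidableEq β]
    (T : Finset β) (h : T.card = Fintype.card α) :
    ((univ : Finset (α → β)).filter (fun f => univ.image f = T)).card =
      (Fintype.card α).factorial := by
  classical
  have hset : ((univ : Finset (α → β)).filter (fun f => univ.image f = T)) =
      (univ : Finset (α ↪ {x // x ∈ T})).image (fun e => fun a => (e a : β)) := by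
    ext f
    simp only [Finset.mem_filter, mem_univ, true_and, Finset.mem_image]
    constructor
    · intro hf
      have hinj : Function.Injective f := by
        have hcard : (univ.image f).card = (univ : Finset α).card := by
          rw [hf, h, Finset.card_univ]
        rw [Finset.card_image_iff] at hcard
        intro a b hab
        exact hcard (Finset.mem_coe.2 (mem_univ a)) (Finset.mem_coe.2 (mem_univ b)) hab
      refine ⟨⟨fun a => ⟨f a, ?_⟩, fun a b hab => hinj (congrArg Subtype.val hab)⟩, rfl⟩
      rw [← hf]; exact Finset.mem_image_of_mem f (mem_univ a)
    · rintro ⟨e, rfl⟩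
      have hbij : Function.Bijective e := by
        rw [Fintype.bijective_iff_injective_and_card]
        exact ⟨e.injective, by rw [Fintype.card_coe, h]⟩
      ext b
      simp only [Finset.mem_image, mem_univ, true_and]
      constructor
      · rintro ⟨a, rfl⟩; exact (e a).2
      · intro hb
        obtain ⟨a, ha⟩ := hbij.2 ⟨b, hb⟩
        exact ⟨a, by rw [ha]⟩
  rw [hset, Finset.card_image_of_injective _ (fun e e' hee' => by
    ext a
    exact congrFun hee' a ), Finset.card_univ,
    Fintype.card_embedding_eq, Fintype.card_coe, h, Nat.descFactorial_self]

def equivLT {m : ℕ} (k : ℕ) (hk : k ≤ m) : Fin k ≃ {j : Fin m // (j : ℕ) < k} where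
  toFun i := ⟨⟨i, lt_of_lt_of_le i.2 hk⟩, i.2⟩
  invFun j := ⟨j.1, j.2⟩
  left_inv i := rfl
  right_inv j := rfl

def equivGE {m : ℕ} (k : ℕ) (hk : k ≤ m) : Fin (m - k) ≃ {j : Fin m // k ≤ (j : ℕ)} where
  toFun i := ⟨⟨k + i, by omega⟩, by simp⟩
  invFun j := ⟨(j : ℕ) - k, by omega⟩
  left_inv i := by ext; simp
  right_inv j := by ext; simp; omega

lemma card_subtype_lt {m k : ℕ} (hk : k ≤ m) :
    Fintype.card {j : Fin m // (j : ℕ) < k} = k := by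
  rw [← Fintype.card_congr (equivLT k hk), Fintype.card_fin]

lemma card_subtype_ge {m k : ℕ} (hk : k ≤ m) :
    Fintype.card {j : Fin m // k ≤ (j : ℕ)} = m - k := by
  rw [← Fintype.card_congr (equivGE k hk), Fintype.card_fin]

lemma card_filter_lt {m k : ℕ} (hk : k ≤ m) :
    ((univ : Finset (Fin m)).filter (fun j : Fin m => (j : ℕ) < k)).card = k := by
  rw [← Fintype.card_subtype, card_subtype_lt hk]

lemma card_filter_ge {m k : ℕ} (hk : k ≤ m) :
    ((univ : Finset (Fin m)).filter (fun j : Fin m => k ≤ (j : ℕ))).card = m - k := by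
  rw [← Fintype.card_subtype, card_subtype_ge hk]

lemma image_subtype_eq {α β : Type*} [Fintype α] [DecidableEq α] [DecidableEq β]
    (p : α → Prop) [DecidablePred p] (f : α → β) :
    (univ : Finset {a // p a}).image (fun a => f a.1) = (univ.filter p).image f := by
  ext b
  simp only [Finset.mem_image, mem_univ, true_and, Finset.mem_filter, Subtype.exists]
  aesop

lemma card_filter_split {m n k : ℕ} (hk : k ≤ m) (T Hd : Finset (Fin n))
    (hT : T.card = k) (hHd : Hd.card = m - k) :
    ((univ : Finset (Fin m → Fin n)).filter (fun f =>
      (univ.filter fun j : Fin m => (j : ℕ) < k).image f = T ∧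
      (univ.filter fun j : Fin m => k ≤ (j : ℕ)).image f = Hd)).card
    = k.factorial * (m - k).factorial := by
  classical
  rw [Finset.card_nbij'
    (i := fun f : Fin m → Fin n =>
      ((fun a : {j : Fin m // (j : ℕ) < k} => f a.1),
       (fun a : {j : Fin m // k ≤ (j : ℕ)} => f a.1)))
    (j := fun p => fun jj : Fin m =>
      if h : (jj : ℕ) < k then p.1 ⟨jj, h⟩ else p.2 ⟨jj, not_lt.1 h⟩)
    (t := ((univ : Finset ({j : Fin m // (j : ℕ) < k} → Fin n)).filter
            (fun g => univ.image g = T)) ×ˢ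
          ((univ : Finset ({j : Fin m // k ≤ (j : ℕ)} → Fin n)).filter
            (fun g => univ.image g = Hd))) ?_ ?_ ?_ ?_]
  · rw [Finset.card_product, card_filter_univ_image_eq T (by rw [hT, card_subtype_lt hk]),
      card_filter_univ_image_eq Hd (by rw [hHd, card_subtype_ge hk]),
      card_subtype_lt hk, card_subtype_ge hk]
  · intro f hf
    rw [Finset.mem_coe, Finset.mem_filter] at hf
    rw [Finset.mem_coe, Finset.mem_product, Finset.mem_filter, Finset.mem_filter]
    exact ⟨⟨mem_univ _, by rw [image_subtype_eq]; exact hf.2.1⟩,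
           ⟨mem_univ _, by rw [image_subtype_eq]; exact hf.2.2⟩⟩
  · intro p hp
    rw [Finset.mem_coe, Finset.mem_product, Finset.mem_filter, Finset.mem_filter] at hp
    rw [Finset.mem_coe, Finset.mem_filter]
    refine ⟨mem_univ _, ?_, ?_⟩
    · rw [← image_subtype_eq (fun j : Fin m => (j : ℕ) < k), ← hp.1.2]
      apply Finset.image_congr
      intro a _
      exact dif_pos a.2
    · rw [← image_subtype_eq (fun j : Fin m => k ≤ (j : ℕ)), ← hp.2.2]
      apply Finset.image_congr
      intro a _
      exact dif_neg (not_lt.2 a.2)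
  · intro f _
    funext jj
    dsimp only
    split_ifs <;> rfl
  · intro p _
    refine Prod.ext ?_ ?_
    · funext a; exact dif_pos a.2
    · funext a; exact dif_neg (not_lt.2 a.2)

lemma prod_split {m n k : ℕ} (hk : k ≤ m) {T Hd : Finset (Fin n)} (hT : T.card = k)
    (hHd : Hd.card = m - k) (hdisj : Disjoint T Hd) (x : Fin n → ℝ) {f : Fin m → Fin n}
    (h1 : (univ.filter fun j : Fin m => (j : ℕ) < k).image f = T)
    (h2 : (univ.filter fun j : Fin m => k ≤ (j : ℕ)).image f = Hd) :
    ∏ j, x (f j) = ∏ v ∈ T ∪ Hd, x v := by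
  classical
  have hfilter : (univ.filter fun j : Fin m => ¬ (j : ℕ) < k) =
      (univ.filter fun j : Fin m => k ≤ (j : ℕ)) := by
    apply Finset.filter_congr; intro j _; simp [not_lt]
  have hinj1 : ∀ a ∈ univ.filter (fun j : Fin m => (j : ℕ) < k),
      ∀ b ∈ univ.filter (fun j : Fin m => (j : ℕ) < k), f a = f b → a = b := by
    have := Finset.injOn_of_card_image_eq (f := f)
      (s := univ.filter (fun j : Fin m => (j : ℕ) < k))
      (by rw [h1, hT, card_filter_lt hk])
    intro a ha b hb hab; exact this (Finset.mem_coe.2 ha) (Finset.mem_coe.2 hb) hab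
  have hinj2 : ∀ a ∈ univ.filter (fun j : Fin m => k ≤ (j : ℕ)),
      ∀ b ∈ univ.filter (fun j : Fin m => k ≤ (j : ℕ)), f a = f b → a = b := by
    have := Finset.injOn_of_card_image_eq (f := f)
      (s := univ.filter (fun j : Fin m => k ≤ (j : ℕ)))
      (by rw [h2, hHd, card_filter_ge hk])
    intro a ha b hb hab; exact this (Finset.mem_coe.2 ha) (Finset.mem_coe.2 hb) hab
  rw [Finset.prod_union hdisj, ← h1, ← h2, Finset.prod_image hinj1, Finset.prod_image hinj2,
    ← hfilter, Finset.prod_filter_mul_prod_filter_not]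

lemma sum_outAdj_term {m n : ℕ} {T Hd : Finset (Fin n)} (hd : Disjoint T Hd)
    (hT : T.Nonempty) (hHne : Hd.Nonempty) (hcard : (T ∪ Hd).card = m) (x : Fin n → ℝ) :
    ∑ f : Fin m → Fin n,
      (if ((univ.filter fun j : Fin m => (j : ℕ) < T.card).image f = T ∧
           (univ.filter fun j : Fin m => T.card ≤ (j : ℕ)).image f = Hd)
       then (1 : ℝ) / ((((m - T.card).factorial * (T.card - 1).factorial : ℕ)) : ℝ)
       else 0) * ∏ j, x (f j)
    = (T.card : ℝ) * ∏ v ∈ T ∪ Hd, x v := by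
  classical
  set k := T.card with hkdef
  have hsum : k + Hd.card = m := by rw [← Finset.card_union_of_disjoint hd, hcard]
  have hk1 : 1 ≤ k := Finset.card_pos.2 hT
  have hk : k ≤ m := by omega
  have hHd : Hd.card = m - k := by omega
  set c : ℝ := (1 : ℝ) / ((((m - k).factorial * (k - 1).factorial : ℕ)) : ℝ) with hc
  have step1 : ∀ f : Fin m → Fin n,
      (if ((univ.filter fun j : Fin m => (j : ℕ) < k).image f = T ∧
           (univ.filter fun j : Fin m => k ≤ (j : ℕ)).image f = Hd)
       then c else 0) * ∏ j, x (f j)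
      = if ((univ.filter fun j : Fin m => (j : ℕ) < k).image f = T ∧
           (univ.filter fun j : Fin m => k ≤ (j : ℕ)).image f = Hd)
        then c * ∏ v ∈ T ∪ Hd, x v else 0 := by
    intro f
    by_cases hf : ((univ.filter fun j : Fin m => (j : ℕ) < k).image f = T ∧
           (univ.filter fun j : Fin m => k ≤ (j : ℕ)).image f = Hd)
    · rw [if_pos hf, if_pos hf, prod_split hk rfl hHd hd x hf.1 hf.2]
    · rw [if_neg hf, if_neg hf, zero_mul]
  rw [Finset.sum_congr rfl (fun f _ => step1 f), ← Finset.sum_filter]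
  rw [Finset.sum_const, card_filter_split hk T Hd rfl hHd, nsmul_eq_mul]
  rw [hc]
  have h1 : ((m - k).factorial : ℝ) ≠ 0 := Nat.cast_ne_zero.2 (Nat.factorial_ne_zero _)
  have h2 : ((k - 1).factorial : ℝ) ≠ 0 := Nat.cast_ne_zero.2 (Nat.factorial_ne_zero _)
  have hkfac : (k : ℝ) * ((k - 1).factorial : ℝ) = (k.factorial : ℝ) := by
    rw [← Nat.cast_mul, Nat.mul_factorial_pred (by omega)]
  push_cast
  rw [← hkfac]
  field_simp

lemma sum_symB_term {m n : ℕ} {s : Finset (Fin n)} (hcard : s.card = m) (c : ℝ) (x : Fin n → ℝ) :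
    ∑ f : Fin m → Fin n,
      (if (Function.Injective f ∧ univ.image f = s) then c else 0) * ∏ j, x (f j)
    = (m.factorial : ℝ) * c * ∏ v ∈ s, x v := by
  classical
  have hinjauto : ∀ f : Fin m → Fin n, univ.image f = s → Function.Injective f := by
    intro f hf
    have hcard' : (univ.image f).card = (univ : Finset (Fin m)).card := by
      rw [hf, hcard, Finset.card_univ, Fintype.card_fin]
    have := Finset.injOn_of_card_image_eq hcard'
    intro a b hab; exact this (Finset.mem_coe.2 (mem_univ a)) (Finset.mem_coe.2 (mem_univ b)) hab
  have step1 : ∀ f : Fin m → Fin n,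
      (if (Function.Injective f ∧ univ.image f = s) then c else 0) * ∏ j, x (f j)
      = if univ.image f = s then c * ∏ v ∈ s, x v else 0 := by
    intro f
    by_cases hf : univ.image f = s
    · rw [if_pos hf, if_pos ⟨hinjauto f hf, hf⟩]
      congr 1
      rw [← hf, Finset.prod_image (fun a _ b _ hab => hinjauto f hf hab)]
    · rw [if_neg hf, if_neg (fun h => hf h.2), zero_mul]
  rw [Finset.sum_congr rfl (fun f _ => step1 f), ← Finset.sum_filter, Finset.sum_const,
    card_filter_univ_image_eq s (by rw [hcard, Fintype.card_fin]), Fintype.card_fin,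
    nsmul_eq_mul, mul_assoc]

lemma lemS {m n : ℕ} (hm : 0 < m) (A : (Fin m → Fin n) → ℝ) (x v : Fin n → ℝ) :
    ∑ g : Fin m → Fin n, A g * (∏ j ∈ univ.erase ⟨0, hm⟩, x (g j)) * v (g ⟨0, hm⟩)
    = ∑ i, hmApply hm A x i * v i := by
  classical
  set z : Fin m := ⟨0, hm⟩
  rw [← Finset.sum_fiberwise_of_maps_to (g := fun g : Fin m → Fin n => g z)
    (t := (univ : Finset (Fin n))) (fun g _ => mem_univ _)
    (fun g => A g * (∏ j ∈ univ.erase z, x (g j)) * v (g z))]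
  apply Finset.sum_congr rfl
  intro i _
  rw [hmApply, Finset.sum_mul, Finset.filter_ne']
  apply Finset.sum_congr rfl
  intro g hg
  rw [Finset.mem_filter] at hg
  rw [hg.2]

lemma formEval_eq_sum {m n : ℕ} (hm : 0 < m) (A : (Fin m → Fin n) → ℝ) (x : Fin n → ℝ) :
    formEval A x = ∑ i, hmApply hm A x i * x i := by
  classical
  rw [← lemS hm A x x, formEval]
  apply Finset.sum_congr rfl
  intro g _
  rw [mul_assoc, mul_comm (∏ j ∈ univ.erase ⟨0, hm⟩, x (g j)), ← mul_assoc, mul_assoc,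
    Finset.mul_prod_erase univ (fun j => x (g j)) (mem_univ (⟨0, hm⟩ : Fin m))]

lemma hmApplyD {m n : ℕ} (hm : 0 < m) (A : (Fin m → Fin n) → ℝ)
    (hsym : ∀ (σ : Equiv.Perm (Fin m)) (f : Fin m → Fin n), A (f ∘ σ) = A f)
    (x v : Fin n → ℝ) :
    ∑ f : Fin m → Fin n, A f * ∑ kk : Fin m, (∏ j ∈ univ.erase kk, x (f j)) * v (f kk)
    = m * ∑ i, hmApply hm A x i * v i := by
  classical
  set z : Fin m := ⟨0, hm⟩
  have inner : ∀ kk : Fin m,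
      ∑ f : Fin m → Fin n, A f * ((∏ j ∈ univ.erase kk, x (f j)) * v (f kk))
      = ∑ i, hmApply hm A x i * v i := by
    intro kk
    set σ : Equiv.Perm (Fin m) := Equiv.swap z kk
    rw [← lemS hm A x v]
    rw [← Fintype.sum_bijective (fun g : Fin m → Fin n => g ∘ σ)
      (Function.Bijective.comp_right σ.bijective) _ _ (fun g => rfl)]
    apply Finset.sum_congr rfl
    intro g _
    simp only [Function.comp_apply]
    rw [hsym σ g]
    have h1 : σ kk = z := Equiv.swap_apply_right z kk
    have h2 : ∏ j ∈ univ.erase kk, x (g (σ j)) = ∏ j ∈ univ.erase z, x (g j) := by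
      rw [← Finset.prod_image (g := (σ : Fin m → Fin m)) (f := fun j => x (g j))
        (fun a _ b _ hab => σ.injective hab)]
      congr 1
      rw [Finset.image_erase σ.injective, Equiv.swap_apply_right]
      rw [Finset.image_univ_equiv]
    rw [h1, h2]
    ring
  calc ∑ f : Fin m → Fin n, A f * ∑ kk : Fin m, (∏ j ∈ univ.erase kk, x (f j)) * v (f kk)
      = ∑ kk : Fin m, ∑ f : Fin m → Fin n, A f * ((∏ j ∈ univ.erase kk, x (f j)) * v (f kk)) := by
        rw [Finset.sum_comm]
        exact Finset.sum_congr rfl fun f _ => by rw [Finset.mul_sum]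
    _ = ∑ kk : Fin m, ∑ i, hmApply hm A x i * v i := Finset.sum_congr rfl fun kk _ => inner kk
    _ = m * ∑ i, hmApply hm A x i * v i := by
        rw [Finset.sum_const, Finset.card_univ, Fintype.card_fin, nsmul_eq_mul]

lemma formEval_outAdj_eq_symB {m n : ℕ} (H : DirHypergraph n) (hH : H.IsUniform m)
    (x : Fin n → ℝ) :
    formEval (outAdj m H) x = formEval (symB m H) x := by
  classical
  unfold formEval outAdj symB
  simp_rw [Finset.sum_mul]
  rw [Finset.sum_comm, Finset.sum_comm (s := (univ : Finset (Fin m → Fin n)))]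
  apply Finset.sum_congr rfl
  intro e he
  have hdisj := H.tail_head_disjoint e he
  have hT := H.tail_nonempty e he
  have hHd := H.head_nonempty e he
  have hcard := hH e he
  rw [sum_outAdj_term hdisj hT hHd hcard x, sum_symB_term hcard _ x]
  have hfac : (m.factorial : ℝ) ≠ 0 := Nat.cast_ne_zero.2 (Nat.factorial_ne_zero _)
  field_simp

lemma symB_perm {m n : ℕ} (H : DirHypergraph n) (σ : Equiv.Perm (Fin m))
    (f : Fin m → Fin n) : symB m H (f ∘ σ) = symB m H f := by
  classical
  unfold symB
  apply Finset.sum_congr rfl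
  intro e _
  have h1 : Function.Injective (f ∘ σ) ↔ Function.Injective f :=
    Equiv.injective_comp σ f
  have h2 : univ.image (f ∘ σ) = univ.image f := by
    rw [← Finset.image_image, Finset.image_univ_equiv]
  rw [if_congr (and_congr h1 (by rw [h2])) rfl rfl]

noncomputable abbrev projR {n : ℕ} (i : Fin n) : (Fin n → ℝ) →L[ℝ] ℝ :=
  ContinuousLinearMap.proj i

noncomputable def phiDeriv {m n : ℕ} (A : (Fin m → Fin n) → ℝ) (x : Fin n → ℝ) :
    (Fin n → ℝ) →L[ℝ] ℝ :=
  ∑ f : Fin m → Fin n, A f • ∑ kk : Fin m, (∏ j ∈ univ.erase kk, x (f j)) •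
    (projR (f kk))

lemma hasStrict_formEval {m n : ℕ} (A : (Fin m → Fin n) → ℝ) (x : Fin n → ℝ) :
    HasStrictFDerivAt (formEval A) (phiDeriv A x) x := by
  unfold formEval phiDeriv
  apply HasStrictFDerivAt.fun_sum
  intro f _
  have h := HasStrictFDerivAt.finset_prod (u := (univ : Finset (Fin m)))
    (g := fun j (y : Fin n → ℝ) => y (f j))
    (g' := fun j => projR (f j))
    (x := x) (fun j _ => (projR (f j)).hasStrictFDerivAt)
  exact h.const_mul (A f)

lemma phiDeriv_apply {m n : ℕ} (A : (Fin m → Fin n) → ℝ) (x v : Fin n → ℝ) :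
    phiDeriv A x v = ∑ f : Fin m → Fin n,
      A f * ∑ kk : Fin m, (∏ j ∈ univ.erase kk, x (f j)) * v (f kk) := by
  simp [phiDeriv, ContinuousLinearMap.sum_apply, ContinuousLinearMap.smul_apply,
    ContinuousLinearMap.proj_apply, smul_eq_mul, Finset.mul_sum]

noncomputable def sphDeriv {n : ℕ} (x : Fin n → ℝ) : (Fin n → ℝ) →L[ℝ] ℝ :=
  ∑ i : Fin n, (x i • projR i + x i • projR i)

lemma hasStrict_sph {n : ℕ} (x : Fin n → ℝ) :
    HasStrictFDerivAt (fun y : Fin n → ℝ => ∑ i, y i ^ 2) (sphDeriv x) x := by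
  unfold sphDeriv
  simp_rw [sq]
  apply HasStrictFDerivAt.fun_sum
  intro i _
  exact (projR i).hasStrictFDerivAt.mul (projR i).hasStrictFDerivAt

lemma sphDeriv_apply {n : ℕ} (x v : Fin n → ℝ) :
    sphDeriv x v = ∑ i, (x i * v i + x i * v i) := by
  simp [sphDeriv, ContinuousLinearMap.sum_apply, ContinuousLinearMap.smul_apply,
    ContinuousLinearMap.proj_apply, smul_eq_mul]

lemma zeig_value {m n : ℕ} (hm : 0 < m) (A : (Fin m → Fin n) → ℝ) {lam : ℝ}
    {x : Fin n → ℝ} (h : IsZEigenpair hm A lam x) : lam = formEval A x := by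
  rw [formEval_eq_sum hm A x]
  calc lam = lam * ∑ i, x i ^ 2 := by rw [h.2, mul_one]
    _ = ∑ i, hmApply hm A x i * x i := by
        rw [Finset.mul_sum]
        apply Finset.sum_congr rfl
        intro i _
        rw [h.1 i, sq]
        ring

lemma exists_max_zeig {m n : ℕ} (hm : 0 < m) (hn : 0 < n) (A : (Fin m → Fin n) → ℝ)
    (hsym : ∀ (σ : Equiv.Perm (Fin m)) (f : Fin m → Fin n), A (f ∘ σ) = A f) :
    ∃ lam x₀, IsZEigenpair hm A lam x₀ ∧
      ∀ y : Fin n → ℝ, ∑ i, y i ^ 2 = 1 → formEval A y ≤ lam := by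
  classical
  set S : Set (Fin n → ℝ) := {y | ∑ i, y i ^ 2 = 1} with hSdef
  have hcont : Continuous (fun y : Fin n → ℝ => ∑ i, y i ^ 2) :=
    continuous_finset_sum _ (fun i _ => (continuous_apply i).pow 2)
  have hclosed : IsClosed S := by
    have hpre : S = (fun y : Fin n → ℝ => ∑ i, y i ^ 2) ⁻¹' {1} := rfl
    rw [hpre]; exact isClosed_singleton.preimage hcont
  have hsub : S ⊆ Metric.closedBall 0 1 := by
    intro y hy
    rw [Metric.mem_closedBall, dist_zero_right]
    rw [pi_norm_le_iff_of_nonneg zero_le_one]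
    intro i
    rw [Real.norm_eq_abs, abs_le_one_iff_mul_self_le_one, ← sq]
    calc y i ^ 2 ≤ ∑ i', y i' ^ 2 :=
          Finset.single_le_sum (fun i' _ => sq_nonneg (y i')) (mem_univ i)
      _ = 1 := hy
  have hScompact : IsCompact S :=
    (isCompact_closedBall 0 1).of_isClosed_subset hclosed hsub
  have hSne : S.Nonempty := by
    refine ⟨(Pi.single ⟨0, hn⟩ 1 : Fin n → ℝ), ?_⟩
    show ∑ i, ((Pi.single ⟨0, hn⟩ 1 : Fin n → ℝ) i) ^ 2 = 1
    have : ∀ i, ((Pi.single ⟨0, hn⟩ 1 : Fin n → ℝ) i) ^ 2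
        = if i = ⟨0, hn⟩ then 1 else 0 := by
      intro i
      rw [Pi.single_apply]
      split_ifs <;> norm_num
    rw [Finset.sum_congr rfl (fun i _ => this i), Finset.sum_ite_eq' univ _ (fun _ => (1 : ℝ))]
    simp
  have hφcont : ContinuousOn (formEval A) S := by
    apply Continuous.continuousOn
    exact continuous_finset_sum _ (fun f _ =>
      continuous_const.mul (continuous_finset_prod _ (fun j _ => continuous_apply (f j))))
  obtain ⟨x₀, hx₀S, hx₀max⟩ := hScompact.exists_isMaxOn hSne hφcont
  have hx₀sum : ∑ i, x₀ i ^ 2 = 1 := hx₀S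
  have hextr : IsLocalExtrOn (formEval A) {y : Fin n → ℝ |
      (fun z : Fin n → ℝ => ∑ i, z i ^ 2) y = (fun z : Fin n → ℝ => ∑ i, z i ^ 2) x₀} x₀ := by
    have h1 : {y : Fin n → ℝ |
        (fun z : Fin n → ℝ => ∑ i, z i ^ 2) y = (fun z : Fin n → ℝ => ∑ i, z i ^ 2) x₀} = S := by
      ext y
      simp only [Set.mem_setOf_eq, hSdef, hx₀sum]
    rw [h1]
    exact (hx₀max.filter_mono (Filter.le_principal_iff.2 self_mem_nhdsWithin)).isExtr
  obtain ⟨a, b, hab, heq⟩ := hextr.exists_multipliers_of_hasStrictFDerivAt_1d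
    (hasStrict_sph x₀) (hasStrict_formEval A x₀)
  have happ : ∀ v : Fin n → ℝ,
      a * (∑ i, (x₀ i * v i + x₀ i * v i)) + b * ((m : ℝ) * ∑ i, hmApply hm A x₀ i * v i)
        = 0 := by
    intro v
    have h0 := ContinuousLinearMap.ext_iff.1 heq v
    rw [ContinuousLinearMap.add_apply, ContinuousLinearMap.smul_apply,
      ContinuousLinearMap.smul_apply, ContinuousLinearMap.zero_apply,
      sphDeriv_apply, phiDeriv_apply] at h0
    rw [← hmApplyD hm A hsym x₀ v]
    simpa [smul_eq_mul] using h0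
  have hsum2 : ∑ i, (x₀ i * x₀ i + x₀ i * x₀ i) = 2 := by
    have : ∀ i, x₀ i * x₀ i + x₀ i * x₀ i = 2 * x₀ i ^ 2 := by intro i; ring
    rw [Finset.sum_congr rfl (fun i _ => this i), ← Finset.mul_sum, hx₀sum, mul_one]
  set lam : ℝ := formEval A x₀ with hlam
  have hvalsum : ∑ i, hmApply hm A x₀ i * x₀ i = lam := (formEval_eq_sum hm A x₀).symm
  have h2 : a * 2 + b * ((m : ℝ) * lam) = 0 := by
    have := happ x₀
    rw [hsum2, hvalsum] at this
    exact this
  have hb : b ≠ 0 := by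
    intro hb0
    rw [hb0, zero_mul, add_zero] at h2
    have ha0 : a = 0 := by linarith
    exact hab (by rw [ha0, hb0]; rfl)
  have heig : ∀ i, hmApply hm A x₀ i = lam * x₀ i := by
    intro i
    have h1 := happ (Pi.single i 1 : Fin n → ℝ)
    have e1 : ∑ i', (x₀ i' * (Pi.single i 1 : Fin n → ℝ) i' + x₀ i' * (Pi.single i 1 : Fin n → ℝ) i')
        = 2 * x₀ i := by
      have : ∀ i', x₀ i' * (Pi.single i 1 : Fin n → ℝ) i' + x₀ i' * (Pi.single i 1 : Fin n → ℝ) i'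
          = if i' = i then 2 * x₀ i' else 0 := by
        intro i'
        rw [Pi.single_apply]
        split_ifs <;> ring
      rw [Finset.sum_congr rfl (fun i' _ => this i'), Finset.sum_ite_eq' univ i]
      simp
    have e2 : ∑ i', hmApply hm A x₀ i' * (Pi.single i 1 : Fin n → ℝ) i' = hmApply hm A x₀ i := by
      have : ∀ i', hmApply hm A x₀ i' * (Pi.single i 1 : Fin n → ℝ) i'
          = if i' = i then hmApply hm A x₀ i' else 0 := by
        intro i'
        rw [Pi.single_apply]
        split_ifs <;> ring
      rw [Finset.sum_congr rfl (fun i' _ => this i'), Finset.sum_ite_eq' univ i]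
      simp
    rw [e1, e2] at h1
    have hm' : (m : ℝ) ≠ 0 := Nat.cast_ne_zero.2 (Nat.pos_iff_ne_zero.1 hm)
    have key : b * ((m : ℝ) * (hmApply hm A x₀ i - lam * x₀ i)) = 0 := by
      linear_combination h1 - x₀ i * h2
    rcases mul_eq_zero.1 key with h | h
    · exact absurd h hb
    · rcases mul_eq_zero.1 h with h' | h'
      · exact absurd h' hm'
      · linarith
  refine ⟨lam, x₀, ⟨heig, hx₀sum⟩, ?_⟩
  intro y hy
  exact isMaxOn_iff.1 hx₀max y hy

lemma formEval_symB_single {m n : ℕ} (hm2 : 2 ≤ m) (H : DirHypergraph n) (i0 : Fin n) :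
    formEval (symB m H) (Pi.single i0 1) = 0 := by
  classical
  rw [formEval]
  apply Finset.sum_eq_zero
  intro f _
  by_cases hinj : Function.Injective f
  · have j0 : Fin m := ⟨0, by omega⟩
    have hne : f ⟨0, by omega⟩ ≠ i0 ∨ f ⟨1, by omega⟩ ≠ i0 := by
      by_contra hcon
      push_neg at hcon
      have := hinj (hcon.1.trans hcon.2.symm)
      simp only [Fin.mk.injEq] at this
      omega
    rcases hne with h | h
    · rw [Finset.prod_eq_zero (mem_univ (⟨0, by omega⟩ : Fin m))
        (by rw [Pi.single_eq_of_ne h]), mul_zero]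
    · rw [Finset.prod_eq_zero (mem_univ (⟨1, by omega⟩ : Fin m))
        (by rw [Pi.single_eq_of_ne h]), mul_zero]
  · have : symB m H f = 0 := by
      rw [symB]
      apply Finset.sum_eq_zero
      intro e _
      rw [if_neg (fun hc => hinj hc.1)]
    rw [this, zero_mul]

lemma sum_single_sq {n : ℕ} (i0 : Fin n) :
    ∑ i, ((Pi.single i0 1 : Fin n → ℝ) i) ^ 2 = 1 := by
  classical
  have : ∀ i, ((Pi.single i0 1 : Fin n → ℝ) i) ^ 2 = if i = i0 then 1 else 0 := by
    intro i
    rw [Pi.single_apply]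
    split_ifs <;> norm_num
  rw [Finset.sum_congr rfl (fun i _ => this i), Finset.sum_ite_eq' univ _ (fun _ => (1 : ℝ))]
  simp

/-- For a directed `m`-uniform hypergraph `H` with `m` even,
the maximum Z-eigenvalue of `A_H⁺` is at most the maximum Z-eigenvalue of the
supersymmetric hypermatrix `B` with the same associated form. -/
theorem zMax_outAdj_le_zMax_symB {m n : ℕ} (hm : 0 < m) (heven : Even m)
    (H : DirHypergraph n) (hH : H.IsUniform m) :
    zMax hm (outAdj m H) ≤ zMax hm (symB m H) := by
  classical
  rcases Nat.eq_zero_or_pos n with hn0 | hn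
  · subst hn0
    have hempty : ∀ (A : (Fin m → Fin 0) → ℝ),
        {lam : ℝ | ∃ x : Fin 0 → ℝ, IsZEigenpair hm A lam x} = ∅ := by
      intro A
      ext lam
      simp only [Set.mem_setOf_eq, Set.mem_empty_iff_false, iff_false, not_exists]
      rintro x ⟨_, hsum⟩
      simp at hsum
    rw [zMax, zMax, hempty, hempty, Real.sSup_empty]
  · have hm2 : 2 ≤ m := by
      rcases heven with ⟨k, hk⟩
      omega
    obtain ⟨lam, x₀, hpair, hmax⟩ :=
      exists_max_zeig hm hn (symB m H) (fun σ f => symB_perm H σ f)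
    have hlam0 : 0 ≤ lam := by
      have h := hmax (Pi.single ⟨0, hn⟩ 1 : Fin n → ℝ) (sum_single_sq _)
      rw [formEval_symB_single hm2 H] at h
      exact h
    have hboundB : ∀ mu ∈ {lam : ℝ | ∃ x, IsZEigenpair hm (symB m H) lam x}, mu ≤ lam := by
      rintro mu ⟨y, hy⟩
      rw [zeig_value hm _ hy]
      exact hmax y hy.2
    have hle1 : zMax hm (outAdj m H) ≤ lam := by
      apply Real.sSup_le _ hlam0
      rintro mu ⟨y, hy⟩
      rw [zeig_value hm _ hy, formEval_outAdj_eq_symB H hH y]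
      exact hmax y hy.2
    have hle2 : lam ≤ zMax hm (symB m H) :=
      le_csSup ⟨lam, hboundB⟩ ⟨x₀, hpair⟩
    linarith
end

section
/- Let H₁ = (V, E₁) and H₂ = (V, E₂) be two directed m-uniform hypergraphs on the same n vertices that have the same underlying undirected hypergraph. Then A_{H₁} = A_{H₁}⁺ + A_{H₁}⁻ and A_{H₂} = A_{H₂}⁺ + A_{H₂}⁻ are isospectral: λ ∈ ℂ is an eigenvalue of A_{H₁} if and only if λ is an eigenvalue of A_{H₂}. -/
open Finset

variable {n : ℕ}

section Aux
variable {ι γ : Type*} [Fintype ι] [DecidableEq ι] [Fintype γ] [DecidableEq γ]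

lemma aux_pin_sum (x : γ → ℂ) (c : γ) (P : Finset ι) :
    ∀ S : Finset γ, P.card = S.card →
      ∑ f ∈ (univ : Finset (ι → γ)).filter
          (fun f => P.image f = S ∧ ∀ j ∉ P, f j = c), ∏ j ∈ P, x (f j)
        = (P.card.factorial : ℂ) * ∏ v ∈ S, x v := by
  induction P using Finset.induction_on with
  | empty =>
    intro S hS
    obtain rfl : S = (∅ : Finset γ) := Finset.card_eq_zero.mp hS.symm
    have hfil : (univ : Finset (ι → γ)).filter
        (fun f => (∅ : Finset ι).image f = (∅ : Finset γ) ∧ ∀ j ∉ (∅ : Finset ι), f j = c)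
        = {fun _ => c} := by
      ext f
      simp only [mem_filter, mem_univ, true_and, image_empty, mem_singleton,
        notMem_empty, not_false_iff, forall_true_left, true_and]
      constructor
      · intro h
        funext j
        exact h j
      · intro h
        subst h
        intro j
        rfl
    rw [hfil]
    simp
  | @insert j₀ P' hj₀ ih =>
    intro S hS
    rw [Finset.card_insert_of_notMem hj₀] at hS
    have hmaps : ∀ f ∈ (univ : Finset (ι → γ)).filter
        (fun f => (insert j₀ P').image f = S ∧ ∀ j ∉ insert j₀ P', f j = c),
        f j₀ ∈ S := by
      intro f hf
      rw [mem_filter] at hf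
      exact hf.2.1 ▸ mem_image_of_mem f (mem_insert_self j₀ P')
    rw [← Finset.sum_fiberwise_of_maps_to hmaps (fun f => ∏ j ∈ insert j₀ P', x (f j))]
    have hstep : ∀ v ∈ S,
        (∑ f ∈ ((univ : Finset (ι → γ)).filter
            (fun f => (insert j₀ P').image f = S ∧ ∀ j ∉ insert j₀ P', f j = c)).filter
            (fun f => f j₀ = v),
          ∏ j ∈ insert j₀ P', x (f j))
        = x v * ∑ g ∈ (univ : Finset (ι → γ)).filter
            (fun g => P'.image g = S.erase v ∧ ∀ j ∉ P', g j = c),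
          ∏ j ∈ P', x (g j) := by
      intro v hv
      rw [Finset.mul_sum]
      refine Finset.sum_nbij' (i := fun f => Function.update f j₀ c)
        (j := fun g => Function.update g j₀ v) ?_ ?_ ?_ ?_ ?_
      · -- forward membership
        intro f hf
        simp only [mem_filter, mem_univ, true_and] at hf ⊢
        obtain ⟨⟨him, hpin⟩, hv0⟩ := hf
        have hinj : Set.InjOn f (insert j₀ P' : Finset ι) :=
          Finset.card_image_iff.mp (by rw [him, Finset.card_insert_of_notMem hj₀, hS])
        have hnot : v ∉ P'.image f := by
          intro hmem
          obtain ⟨j, hj, hjv⟩ := Finset.mem_image.mp hmem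
          have hj' : j = j₀ := hinj (Finset.mem_coe.mpr (mem_insert_of_mem hj))
            (Finset.mem_coe.mpr (mem_insert_self j₀ P')) (by rw [hjv, hv0])
          exact hj₀ (hj' ▸ hj)
        constructor
        · have himg : P'.image (Function.update f j₀ c) = P'.image f :=
            Finset.image_congr (fun a ha => Function.update_of_ne (by rintro rfl; exact hj₀ ha) _ _)
          rw [himg]
          rw [Finset.image_insert, hv0] at him
          rw [← him, Finset.erase_insert hnot]
        · intro j hj
          by_cases hjj : j = j₀
          · subst hjj; simp
          · rw [Function.update_of_ne hjj]
            exact hpin j (by simp [hjj, hj])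
      · -- backward membership
        intro g hg
        simp only [mem_filter, mem_univ, true_and] at hg ⊢
        obtain ⟨him, hpin⟩ := hg
        refine ⟨⟨?_, ?_⟩, by simp⟩
        · rw [Finset.image_insert, Function.update_self]
          have himg : P'.image (Function.update g j₀ v) = P'.image g :=
            Finset.image_congr (fun a ha => Function.update_of_ne (by rintro rfl; exact hj₀ ha) _ _)
          rw [himg, him, Finset.insert_erase hv]
        · intro j hj
          simp only [Finset.mem_insert, not_or] at hj
          rw [Function.update_of_ne hj.1]
          exact hpin j hj.2
      · -- left inverse
        intro f hf
        simp only [mem_filter, mem_univ, true_and] at hf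
        show Function.update (Function.update f j₀ c) j₀ v = f
        rw [Function.update_idem, ← hf.2, Function.update_eq_self]
      · -- right inverse
        intro g hg
        simp only [mem_filter, mem_univ, true_and] at hg
        show Function.update (Function.update g j₀ v) j₀ c = g
        rw [Function.update_idem, ← hg.2 j₀ hj₀, Function.update_eq_self]
      · -- value equality
        intro f hf
        simp only [mem_filter, mem_univ, true_and] at hf
        show ∏ j ∈ insert j₀ P', x (f j) = x v * ∏ j ∈ P', x (Function.update f j₀ c j)
        rw [Finset.prod_insert hj₀, hf.2]
        congr 1
        exact Finset.prod_congr rfl (fun j hj =>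
          by rw [Function.update_of_ne (by rintro rfl; exact hj₀ hj)])
    rw [Finset.sum_congr rfl hstep]
    have hstep2 : ∀ v ∈ S, (x v * ∑ g ∈ (univ : Finset (ι → γ)).filter
            (fun g => P'.image g = S.erase v ∧ ∀ j ∉ P', g j = c),
          ∏ j ∈ P', x (g j)) = (P'.card.factorial : ℂ) * ∏ w ∈ S, x w := by
      intro v hv
      rw [ih (S.erase v) (by rw [Finset.card_erase_of_mem hv, ← hS]; rfl)]
      rw [← mul_assoc, mul_comm (x v), mul_assoc, Finset.mul_prod_erase S x hv]
    rw [Finset.sum_congr rfl hstep2, Finset.sum_const, Finset.card_insert_of_notMem hj₀]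
    rw [← hS, nsmul_eq_mul]
    push_cast [Nat.factorial_succ]
    ring

end Aux

section Aux2
variable {ι γ : Type*} [Fintype ι] [DecidableEq ι] [Fintype γ] [DecidableEq γ]


lemma aux_pin_sum_fixed (x : γ → ℂ) (c : γ) (P : Finset ι) (S : Finset γ)
    (j₀ : ι) (hj₀ : j₀ ∈ P) (i : γ) (hi : i ∈ S) (hcard : P.card = S.card) :
    ∑ f ∈ (univ : Finset (ι → γ)).filter
        (fun f => f j₀ = i ∧ P.image f = S ∧ ∀ j ∉ P, f j = c),
      ∏ j ∈ P.erase j₀, x (f j)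
    = ((P.card - 1).factorial : ℂ) * ∏ v ∈ S.erase i, x v := by
  have hc1 : (P.erase j₀).card = (S.erase i).card := by
    rw [card_erase_of_mem hj₀, card_erase_of_mem hi, hcard]
  have h2 : (P.card - 1) = (P.erase j₀).card := (card_erase_of_mem hj₀).symm
  rw [h2, ← aux_pin_sum x c (P.erase j₀) (S.erase i) hc1]
  refine Finset.sum_nbij' (i := fun f => Function.update f j₀ c)
    (j := fun g => Function.update g j₀ i) ?_ ?_ ?_ ?_ ?_
  · intro f hf
    simp only [mem_filter, mem_univ, true_and] at hf ⊢
    obtain ⟨hv0, him, hpin⟩ := hf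
    have hinj : Set.InjOn f (P : Set ι) :=
      Finset.card_image_iff.mp (by rw [him, hcard])
    have hnot : i ∉ (P.erase j₀).image f := by
      intro hmem
      obtain ⟨j, hj, hjv⟩ := Finset.mem_image.mp hmem
      have hj' : j = j₀ := hinj (Finset.mem_coe.mpr (mem_of_mem_erase hj))
        (Finset.mem_coe.mpr hj₀) (by rw [hjv, hv0])
      exact (notMem_erase j₀ P) (hj' ▸ hj)
    constructor
    · have himg : (P.erase j₀).image (Function.update f j₀ c) = (P.erase j₀).image f :=
        Finset.image_congr (fun a ha => Function.update_of_ne (ne_of_mem_erase ha) _ _)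
      rw [himg]
      have hP : P = insert j₀ (P.erase j₀) := (Finset.insert_erase hj₀).symm
      rw [hP, Finset.image_insert, hv0] at him
      rw [← him, Finset.erase_insert hnot]
    · intro j hj
      by_cases hjj : j = j₀
      · subst hjj; simp
      · rw [Function.update_of_ne hjj]
        exact hpin j (fun hjP => hj (Finset.mem_erase.mpr ⟨hjj, hjP⟩))
  · intro g hg
    simp only [mem_filter, mem_univ, true_and] at hg ⊢
    obtain ⟨him, hpin⟩ := hg
    refine ⟨Function.update_self _ _ _, ?_, ?_⟩
    · have hP : P = insert j₀ (P.erase j₀) := (Finset.insert_erase hj₀).symm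
      rw [hP, Finset.image_insert, Function.update_self]
      have himg : (P.erase j₀).image (Function.update g j₀ i) = (P.erase j₀).image g :=
        Finset.image_congr (fun a ha => Function.update_of_ne (ne_of_mem_erase ha) _ _)
      rw [himg, him, Finset.insert_erase hi]
    · intro j hj
      by_cases hjj : j = j₀
      · exact absurd (hjj ▸ hj₀) (hjj ▸ hj)
      · rw [Function.update_of_ne hjj]
        exact hpin j (fun hjP => hj (mem_of_mem_erase hjP))
  · intro f hf
    simp only [mem_filter, mem_univ, true_and] at hf
    show Function.update (Function.update f j₀ c) j₀ i = f
    rw [Function.update_idem, ← hf.1, Function.update_eq_self]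
  · intro g hg
    simp only [mem_filter, mem_univ, true_and] at hg
    show Function.update (Function.update g j₀ i) j₀ c = g
    have : g j₀ = c := hg.2 j₀ (notMem_erase j₀ P)
    rw [Function.update_idem, ← this, Function.update_eq_self]
  · intro f hf
    show ∏ j ∈ P.erase j₀, x (f j) = ∏ j ∈ P.erase j₀, x (Function.update f j₀ c j)
    exact Finset.prod_congr rfl (fun j hj =>
      by rw [Function.update_of_ne (ne_of_mem_erase hj)])

lemma aux_two_block (x : γ → ℂ) (P₁ P₂ : Finset ι) (S₁ S₂ : Finset γ)
    (j₀ : ι) (i : γ) (hPd : Disjoint P₁ P₂) (hPu : P₁ ∪ P₂ = univ)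
    (hj₀ : j₀ ∈ P₁) (hi : i ∈ S₁) (h1 : P₁.card = S₁.card) (h2 : P₂.card = S₂.card) :
    ∑ f ∈ (univ : Finset (ι → γ)).filter
        (fun f => f j₀ = i ∧ P₁.image f = S₁ ∧ P₂.image f = S₂),
      ∏ j ∈ univ.erase j₀, x (f j)
    = ((P₁.card - 1).factorial : ℂ) * (P₂.card.factorial : ℂ) *
        ((∏ v ∈ S₁.erase i, x v) * ∏ v ∈ S₂, x v) := by
  have hj₀2 : j₀ ∉ P₂ := fun h => (Finset.disjoint_left.mp hPd hj₀) h
  have hdisj2 : Disjoint (P₁.erase j₀) P₂ := hPd.mono_left (erase_subset _ _)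
  have hsplit : (univ : Finset ι).erase j₀ = (P₁.erase j₀) ∪ P₂ := by
    rw [← hPu, Finset.erase_union_distrib, Finset.erase_eq_of_notMem hj₀2]
  have hprod : ∀ f : ι → γ, ∏ j ∈ (univ : Finset ι).erase j₀, x (f j)
      = (∏ j ∈ P₁.erase j₀, x (f j)) * ∏ j ∈ P₂, x (f j) := fun f => by
    rw [hsplit, Finset.prod_union hdisj2]
  simp only [hprod]
  have imgc : ∀ (Q : Finset ι) (f g : ι → γ), (∀ a ∈ Q, f a = g a) → Q.image f = Q.image g :=
    fun Q f g h => Finset.image_congr (fun a ha => h a (Finset.mem_coe.mp ha))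
  have key : ∑ f ∈ (univ : Finset (ι → γ)).filter
        (fun f => f j₀ = i ∧ P₁.image f = S₁ ∧ P₂.image f = S₂),
      (∏ j ∈ P₁.erase j₀, x (f j)) * ∏ j ∈ P₂, x (f j)
      = ∑ p ∈ ((univ : Finset (ι → γ)).filter
            (fun g => g j₀ = i ∧ P₁.image g = S₁ ∧ ∀ j ∉ P₁, g j = i)) ×ˢ
          ((univ : Finset (ι → γ)).filter
            (fun h => P₂.image h = S₂ ∧ ∀ j ∉ P₂, h j = i)),
        (∏ j ∈ P₁.erase j₀, x (p.1 j)) * ∏ j ∈ P₂, x (p.2 j) := by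
    refine Finset.sum_nbij'
      (i := fun f => (P₁.piecewise f (fun _ => i), P₂.piecewise f (fun _ => i)))
      (j := fun p => P₁.piecewise p.1 p.2) ?_ ?_ ?_ ?_ ?_
    · intro f hf
      simp only [mem_filter, mem_univ, true_and, Finset.mem_product] at hf ⊢
      obtain ⟨hv0, h1', h2'⟩ := hf
      refine ⟨⟨by rw [Finset.piecewise_eq_of_mem _ _ _ hj₀]; exact hv0, ?_, ?_⟩, ?_, ?_⟩
      · rw [imgc P₁ _ f (fun a ha => Finset.piecewise_eq_of_mem _ _ _ ha)]
        exact h1'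
      · intro j hj; exact Finset.piecewise_eq_of_notMem _ _ _ hj
      · rw [imgc P₂ _ f (fun a ha => Finset.piecewise_eq_of_mem _ _ _ ha)]
        exact h2'
      · intro j hj; exact Finset.piecewise_eq_of_notMem _ _ _ hj
    · intro p hp
      simp only [mem_filter, mem_univ, true_and, Finset.mem_product] at hp ⊢
      obtain ⟨⟨hg0, hg1, hgp⟩, hh1, hhp⟩ := hp
      refine ⟨by rw [Finset.piecewise_eq_of_mem _ _ _ hj₀]; exact hg0, ?_, ?_⟩
      · rw [imgc P₁ _ p.1 (fun a ha => Finset.piecewise_eq_of_mem _ _ _ ha)]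
        exact hg1
      · rw [imgc P₂ _ p.2 (fun a ha =>
          Finset.piecewise_eq_of_notMem _ _ _ (fun h => (Finset.disjoint_right.mp hPd ha) h))]
        exact hh1
    · intro f hf
      show P₁.piecewise (P₁.piecewise f fun _ => i) (P₂.piecewise f fun _ => i) = f
      funext j
      by_cases hj : j ∈ P₁
      · rw [Finset.piecewise_eq_of_mem _ _ _ hj, Finset.piecewise_eq_of_mem _ _ _ hj]
      · have hj2 : j ∈ P₂ := by
          have : j ∈ P₁ ∪ P₂ := hPu ▸ mem_univ j
          exact (Finset.mem_union.mp this).resolve_left hj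
        rw [Finset.piecewise_eq_of_notMem _ _ _ hj, Finset.piecewise_eq_of_mem _ _ _ hj2]
    · intro p hp
      simp only [mem_filter, mem_univ, true_and, Finset.mem_product] at hp
      obtain ⟨⟨hg0, hg1, hgp⟩, hh1, hhp⟩ := hp
      show (P₁.piecewise (P₁.piecewise p.1 p.2) fun _ => i,
            P₂.piecewise (P₁.piecewise p.1 p.2) fun _ => i) = p
      have e1 : P₁.piecewise (P₁.piecewise p.1 p.2) (fun _ => i) = p.1 := by
        funext j
        by_cases hj : j ∈ P₁
        · rw [Finset.piecewise_eq_of_mem _ _ _ hj, Finset.piecewise_eq_of_mem _ _ _ hj]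
        · rw [Finset.piecewise_eq_of_notMem _ _ _ hj, hgp j hj]
      have e2 : P₂.piecewise (P₁.piecewise p.1 p.2) (fun _ => i) = p.2 := by
        funext j
        by_cases hj : j ∈ P₂
        · rw [Finset.piecewise_eq_of_mem _ _ _ hj,
            Finset.piecewise_eq_of_notMem _ _ _ (fun h => (Finset.disjoint_right.mp hPd hj) h)]
        · rw [Finset.piecewise_eq_of_notMem _ _ _ hj, hhp j hj]
      rw [e1, e2]
    · intro f hf
      show (∏ j ∈ P₁.erase j₀, x (f j)) * ∏ j ∈ P₂, x (f j)
        = (∏ j ∈ P₁.erase j₀, x (P₁.piecewise f (fun _ => i) j)) *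
            ∏ j ∈ P₂, x (P₂.piecewise f (fun _ => i) j)
      congr 1
      · exact Finset.prod_congr rfl (fun j hj => by
          rw [Finset.piecewise_eq_of_mem _ _ _ (mem_of_mem_erase hj)])
      · exact Finset.prod_congr rfl (fun j hj => by
          rw [Finset.piecewise_eq_of_mem _ _ _ hj])
  rw [key, Finset.sum_product]
  simp only []
  rw [← Finset.sum_mul_sum]
  rw [aux_pin_sum_fixed x i P₁ S₁ j₀ hj₀ i hi h1, aux_pin_sum x i P₂ S₂ h2]
  ring
end Aux2

lemma fin_filter_lt_card (m k : ℕ) (h : k ≤ m) :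
    ((univ : Finset (Fin m)).filter (fun j : Fin m => (j : ℕ) < k)).card = k := by
  have : ((univ : Finset (Fin m)).filter (fun j : Fin m => (j : ℕ) < k))
      = Finset.map (Fin.castLEEmb h) univ := by
    ext j
    simp only [mem_filter, mem_univ, true_and, Finset.mem_map, Fin.castLEEmb, Fin.castLE]
    constructor
    · intro hj; exact ⟨⟨j, hj⟩, by simp⟩
    · rintro ⟨a, rfl⟩; simp [a.isLt]
  rw [this, card_map, card_univ, Fintype.card_fin]

lemma fin_filter_ge_card (m k : ℕ) (h : k ≤ m) :
    ((univ : Finset (Fin m)).filter (fun j : Fin m => k ≤ (j : ℕ))).card = m - k := by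
  have h2 : ((univ : Finset (Fin m)).filter (fun j : Fin m => k ≤ (j : ℕ)))
      = univ \ ((univ : Finset (Fin m)).filter (fun j : Fin m => (j : ℕ) < k)) := by
    rw [← filter_not]
    simp only [not_lt]
  rw [h2, card_sdiff_of_subset (filter_subset _ _), card_univ, Fintype.card_fin,
    fin_filter_lt_card m k h]


lemma block_sum {m n : ℕ} (hm : 0 < m) (k : ℕ) (hk : 1 ≤ k) (hkm : k ≤ m)
    (S₁ S₂ : Finset (Fin n)) (h1 : S₁.card = k) (h2 : S₂.card = m - k)
    (x : Fin n → ℂ) (i : Fin n) :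
    ∑ f ∈ univ.filter (fun f : Fin m → Fin n => f ⟨0, hm⟩ = i),
      (if ((univ.filter fun j : Fin m => (j : ℕ) < k).image f = S₁ ∧
           (univ.filter fun j : Fin m => k ≤ (j : ℕ)).image f = S₂)
       then ∏ j ∈ univ.filter (fun j : Fin m => j ≠ ⟨0, hm⟩), x (f j) else 0)
    = if i ∈ S₁ then ((k-1).factorial : ℂ) * ((m-k).factorial : ℂ) *
        ((∏ v ∈ S₁.erase i, x v) * ∏ v ∈ S₂, x v) else 0 := by
  have hfe : (univ : Finset (Fin m)).filter (fun j => j ≠ ⟨0, hm⟩)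
      = univ.erase ⟨0, hm⟩ := Finset.filter_ne' _ _
  simp only [hfe]
  rw [← Finset.sum_filter, Finset.filter_filter]
  have hj₀ : (⟨0, hm⟩ : Fin m) ∈ (univ : Finset (Fin m)).filter (fun j : Fin m => (j : ℕ) < k) := by
    simp only [mem_filter, mem_univ, true_and]
    exact hk
  by_cases hi : i ∈ S₁
  · rw [if_pos hi]
    rw [aux_two_block x _ _ S₁ S₂ (⟨0, hm⟩ : Fin m) i ?_ ?_ hj₀ hi ?_ ?_]
    · rw [fin_filter_lt_card m k hkm, fin_filter_ge_card m k hkm]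
    · simp only [Finset.disjoint_left, mem_filter, mem_univ, true_and]
      omega
    · ext j
      simp only [Finset.mem_union, mem_filter, mem_univ, true_and, iff_true]
      omega
    · rw [fin_filter_lt_card m k hkm, h1]
    · rw [fin_filter_ge_card m k hkm, h2]
  · rw [if_neg hi]
    rw [Finset.filter_false_of_mem, Finset.sum_empty]
    rintro f - ⟨h0, hA, -⟩
    rw [← hA, ← h0] at hi
    exact hi (Finset.mem_image_of_mem f hj₀)


lemma edge_contrib {m n : ℕ} (hm : 0 < m) (H : DirHypergraph n) (hu : H.IsUniform m)
    (x : Fin n → ℂ) (i : Fin n) :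
    hmApplyC hm (fun f => outAdj m H f + inAdj m H f) x i
      = ∑ e ∈ H.edges, if i ∈ e.1 ∪ e.2 then ∏ v ∈ (e.1 ∪ e.2).erase i, x v else 0 := by
  simp only [hmApplyC, outAdj, inAdj, Complex.ofReal_add, Complex.ofReal_sum,
    apply_ite (fun r : ℝ => (r : ℂ)), Complex.ofReal_div, Complex.ofReal_one,
    Complex.ofReal_natCast, Complex.ofReal_zero, add_mul, Finset.sum_mul]
  rw [Finset.sum_add_distrib, Finset.sum_comm, Finset.sum_comm
    (s := (univ : Finset (Fin m → Fin n)).filter (fun f => f ⟨0, hm⟩ = i))]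
  rw [← Finset.sum_add_distrib]
  refine Finset.sum_congr rfl (fun e he => ?_)
  have hd : Disjoint e.1 e.2 := H.tail_head_disjoint e he
  have hk1 : 1 ≤ e.1.card := Finset.card_pos.mpr (H.tail_nonempty e he)
  have hk2 : 1 ≤ e.2.card := Finset.card_pos.mpr (H.head_nonempty e he)
  have hsum : e.1.card + e.2.card = m := by
    rw [← Finset.card_union_of_disjoint hd]; exact hu e he
  have hkm : e.1.card ≤ m := by omega
  have hklt : e.1.card < m := by omega
  have h2c : e.2.card = m - e.1.card := by omega
  -- first summand: tail block
  have eq1 : ∑ f ∈ (univ : Finset (Fin m → Fin n)).filter (fun f => f ⟨0, hm⟩ = i),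
      (if ((univ.filter fun j : Fin m => (j : ℕ) < e.1.card).image f = e.1 ∧
           (univ.filter fun j : Fin m => e.1.card ≤ (j : ℕ)).image f = e.2)
       then (1 : ℂ) / ((((m - e.1.card).factorial * (e.1.card - 1).factorial : ℕ)) : ℂ)
       else 0) * ∏ j ∈ univ.filter (fun j : Fin m => j ≠ ⟨0, hm⟩), x (f j)
      = if i ∈ e.1 then (∏ v ∈ e.1.erase i, x v) * ∏ v ∈ e.2, x v else 0 := by
    have hw : ∀ f ∈ (univ : Finset (Fin m → Fin n)).filter (fun f => f ⟨0, hm⟩ = i),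
        (if ((univ.filter fun j : Fin m => (j : ℕ) < e.1.card).image f = e.1 ∧
             (univ.filter fun j : Fin m => e.1.card ≤ (j : ℕ)).image f = e.2)
         then (1 : ℂ) / ((((m - e.1.card).factorial * (e.1.card - 1).factorial : ℕ)) : ℂ)
         else 0) * ∏ j ∈ univ.filter (fun j : Fin m => j ≠ ⟨0, hm⟩), x (f j)
        = ((1 : ℂ) / ((((m - e.1.card).factorial * (e.1.card - 1).factorial : ℕ)) : ℂ)) *
          (if ((univ.filter fun j : Fin m => (j : ℕ) < e.1.card).image f = e.1 ∧
             (univ.filter fun j : Fin m => e.1.card ≤ (j : ℕ)).image f = e.2)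
           then ∏ j ∈ univ.filter (fun j : Fin m => j ≠ ⟨0, hm⟩), x (f j) else 0) := by
      intro f _
      split <;> ring
    rw [Finset.sum_congr rfl hw, ← Finset.mul_sum]
    rw [block_sum hm e.1.card hk1 hkm e.1 e.2 rfl h2c x i]
    rw [mul_ite, mul_zero]
    congr 1
    rw [← mul_assoc]
    have hne : ((((m - e.1.card).factorial * (e.1.card - 1).factorial : ℕ)) : ℂ) ≠ 0 := by
      exact_mod_cast Nat.cast_ne_zero.mpr
        (Nat.mul_ne_zero (Nat.factorial_ne_zero _) (Nat.factorial_ne_zero _))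
    have : (1 : ℂ) / ((((m - e.1.card).factorial * (e.1.card - 1).factorial : ℕ)) : ℂ) *
        (((e.1.card - 1).factorial : ℂ) * ((m - e.1.card).factorial : ℂ)) = 1 := by
      rw [one_div, inv_mul_eq_div, div_eq_one_iff_eq hne]
      push_cast
      ring
    rw [this, one_mul]
  -- second summand: head block
  have eq2 : ∑ f ∈ (univ : Finset (Fin m → Fin n)).filter (fun f => f ⟨0, hm⟩ = i),
      (if ((univ.filter fun j : Fin m => (j : ℕ) < m - e.1.card).image f = e.2 ∧
           (univ.filter fun j : Fin m => m - e.1.card ≤ (j : ℕ)).image f = e.1)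
       then (1 : ℂ) / ((((m - e.1.card - 1).factorial * (e.1.card).factorial : ℕ)) : ℂ)
       else 0) * ∏ j ∈ univ.filter (fun j : Fin m => j ≠ ⟨0, hm⟩), x (f j)
      = if i ∈ e.2 then (∏ v ∈ e.2.erase i, x v) * ∏ v ∈ e.1, x v else 0 := by
    have hw : ∀ f ∈ (univ : Finset (Fin m → Fin n)).filter (fun f => f ⟨0, hm⟩ = i),
        (if ((univ.filter fun j : Fin m => (j : ℕ) < m - e.1.card).image f = e.2 ∧
             (univ.filter fun j : Fin m => m - e.1.card ≤ (j : ℕ)).image f = e.1)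
         then (1 : ℂ) / ((((m - e.1.card - 1).factorial * (e.1.card).factorial : ℕ)) : ℂ)
         else 0) * ∏ j ∈ univ.filter (fun j : Fin m => j ≠ ⟨0, hm⟩), x (f j)
        = ((1 : ℂ) / ((((m - e.1.card - 1).factorial * (e.1.card).factorial : ℕ)) : ℂ)) *
          (if ((univ.filter fun j : Fin m => (j : ℕ) < m - e.1.card).image f = e.2 ∧
             (univ.filter fun j : Fin m => m - e.1.card ≤ (j : ℕ)).image f = e.1)
           then ∏ j ∈ univ.filter (fun j : Fin m => j ≠ ⟨0, hm⟩), x (f j) else 0) := by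
      intro f _
      split <;> ring
    rw [Finset.sum_congr rfl hw, ← Finset.mul_sum]
    have hk1' : 1 ≤ m - e.1.card := by omega
    have hkm' : m - e.1.card ≤ m := by omega
    have hs1 : e.2.card = m - e.1.card := h2c
    have hs2 : e.1.card = m - (m - e.1.card) := by omega
    rw [block_sum hm (m - e.1.card) hk1' hkm' e.2 e.1 hs1 hs2 x i]
    rw [mul_ite, mul_zero]
    congr 1
    rw [← mul_assoc]
    have hne : ((((m - e.1.card - 1).factorial * (e.1.card).factorial : ℕ)) : ℂ) ≠ 0 := by
      exact_mod_cast Nat.cast_ne_zero.mpr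
        (Nat.mul_ne_zero (Nat.factorial_ne_zero _) (Nat.factorial_ne_zero _))
    have : (1 : ℂ) / ((((m - e.1.card - 1).factorial * (e.1.card).factorial : ℕ)) : ℂ) *
        (((m - e.1.card - 1).factorial : ℂ) * ((m - (m - e.1.card)).factorial : ℂ)) = 1 := by
      rw [show m - (m - e.1.card) = e.1.card by omega]
      rw [one_div, inv_mul_eq_div, div_eq_one_iff_eq hne]
      push_cast
      ring
    rw [this, one_mul]
  rw [eq1, eq2]
  -- combine the two indicators
  have hdu : (e.1 ∪ e.2).erase i = e.1.erase i ∪ e.2.erase i :=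
    Finset.erase_union_distrib e.1 e.2 i
  have hdd : Disjoint (e.1.erase i) (e.2.erase i) :=
    hd.mono (Finset.erase_subset _ _) (Finset.erase_subset _ _)
  by_cases h1 : i ∈ e.1
  · have h2 : i ∉ e.2 := fun h => (Finset.disjoint_left.mp hd h1) h
    rw [if_pos h1, if_neg h2, if_pos (Finset.mem_union_left _ h1), add_zero,
      hdu, Finset.prod_union hdd, Finset.erase_eq_of_notMem h2]
  · by_cases h2 : i ∈ e.2
    · rw [if_neg h1, if_pos h2, if_pos (Finset.mem_union_right _ h2), zero_add,
        hdu, Finset.prod_union hdd, Finset.erase_eq_of_notMem h1, mul_comm]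
    · rw [if_neg h1, if_neg h2, if_neg (by simp [h1, h2]), add_zero]

/-- Two directed `m`-uniform hypergraphs on the same vertex
set having the same underlying undirected hypergraph have isospectral
adjacency hypermatrices `A_{H₁} = A_{H₁}⁺ + A_{H₁}⁻` and
`A_{H₂} = A_{H₂}⁺ + A_{H₂}⁻`. -/
theorem same_underlying_isospectral {m n : ℕ} (hm : 0 < m)
    (H₁ H₂ : DirHypergraph n) (h₁ : H₁.IsUniform m) (h₂ : H₂.IsUniform m)
    (hsame : H₁.edges.image (fun e => e.1 ∪ e.2) =
      H₂.edges.image (fun e => e.1 ∪ e.2)) :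
    ∀ lam : ℂ,
      IsEigenvalue hm (fun f => outAdj m H₁ f + inAdj m H₁ f) lam ↔
        IsEigenvalue hm (fun f => outAdj m H₂ f + inAdj m H₂ f) lam := by
  
  have key : ∀ (x : Fin n → ℂ) (i : Fin n),
      hmApplyC hm (fun f => outAdj m H₁ f + inAdj m H₁ f) x i =
      hmApplyC hm (fun f => outAdj m H₂ f + inAdj m H₂ f) x i := by
    intro x i
    rw [edge_contrib hm H₁ h₁ x i, edge_contrib hm H₂ h₂ x i]
    have e1 := Finset.sum_image (s := H₁.edges) (g := fun e : Finset (Fin n) × Finset (Fin n) => e.1 ∪ e.2)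
      (f := fun U : Finset (Fin n) => if i ∈ U then ∏ v ∈ U.erase i, x v else 0) H₁.union_injective
    have e2 := Finset.sum_image (s := H₂.edges) (g := fun e : Finset (Fin n) × Finset (Fin n) => e.1 ∪ e.2)
      (f := fun U : Finset (Fin n) => if i ∈ U then ∏ v ∈ U.erase i, x v else 0) H₂.union_injective
    rw [← e1, hsame, e2]
  intro lam
  constructor
  · rintro ⟨x, hx0, hx⟩
    exact ⟨x, hx0, fun i => by rw [← key x i]; exact hx i⟩
  · rintro ⟨x, hx0, hx⟩
    exact ⟨x, hx0, fun i => by rw [key x i]; exact hx i⟩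
end

section
/- Let H be a directed m-uniform hypergraph on n vertices with m even, and let H₁,…,H_p be directed spanning subhypergraphs of H (each on the same vertex set V) whose edge sets E(H₁),…,E(H_p) form a partition of E. Then λ_max^Z(A_H) ≤ Σ_{i=1}^p λ_max^Z(A_{H_i}), where A_G = A_G⁺ + A_G⁻ for a directed m-uniform hypergraph G. -/
open Finset

variable {n : ℕ}

lemma sum_prod_image_eq {ι : Type*} [Fintype ι] [DecidableEq ι] {n : ℕ}
    (S : Finset (Fin n)) (h : Fintype.card ι = S.card) (x : Fin n → ℝ) :
    ∑ g ∈ Finset.univ.filter (fun g : ι → Fin n => Finset.univ.image g = S), ∏ j, x (g j)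
      = (S.card.factorial : ℝ) * ∏ v ∈ S, x v := by
  classical
  set φ : (ι ≃ {v // v ∈ S}) → (ι → Fin n) := fun e j => (e j : Fin n) with hφ
  have hinj : Function.Injective φ := by
    intro e e' he
    exact Equiv.ext fun j => Subtype.ext (congrFun he j)
  have hset : Finset.univ.filter (fun g : ι → Fin n => Finset.univ.image g = S)
      = Finset.univ.image φ := by
    ext g
    simp only [mem_filter, mem_univ, true_and, Finset.mem_image]
    constructor
    · intro hg
      have hginj : Set.InjOn g (Finset.univ : Finset ι) := by
        apply Finset.injOn_of_card_image_eq
        rw [hg, ← h, Finset.card_univ]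
      have hmem : ∀ j, g j ∈ S := fun j => hg ▸ Finset.mem_image_of_mem g (mem_univ j)
      set g' : ι → {v // v ∈ S} := fun j => ⟨g j, hmem j⟩ with hg'
      have hbij : Function.Bijective g' := by
        rw [Fintype.bijective_iff_injective_and_card]
        constructor
        · intro a b hab
          exact hginj (by simp) (by simp) (congrArg Subtype.val hab)
        · simp [Fintype.card_coe, h]
      exact ⟨Equiv.ofBijective g' hbij, rfl⟩
    · rintro ⟨e, _, rfl⟩
      ext v
      simp only [Finset.mem_image, mem_univ, true_and, hφ]
      constructor
      · rintro ⟨j, rfl⟩; exact (e j).2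
      · intro hv; exact ⟨e.symm ⟨v, hv⟩, by simp⟩
  rw [hset, Finset.sum_image (fun a _ b _ hab => hinj hab)]
  have hval : ∀ e : ι ≃ {v // v ∈ S}, ∏ j, x (φ e j) = ∏ v ∈ S, x v := by
    intro e
    rw [show (∏ j, x (φ e j)) = ∏ v : {v // v ∈ S}, x v from Equiv.prod_comp e (fun v : {v // v ∈ S} => x v.val)]
    exact Finset.prod_coe_sort S x
  rw [Finset.sum_congr rfl (fun e _ => hval e), Finset.sum_const, Finset.card_univ]
  have : Fintype.card (ι ≃ {v // v ∈ S}) = S.card.factorial := by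
    have e0 : ι ≃ {v // v ∈ S} :=
      Fintype.equivOfCardEq (by simp [Fintype.card_coe, h])
    rw [Fintype.card_equiv e0, h]
  rw [this, nsmul_eq_mul]


lemma sum_prod_image_pin {ι : Type*} [Fintype ι] [DecidableEq ι] {n : ℕ}
    (S : Finset (Fin n)) (j0 : ι) (i : Fin n) (h : Fintype.card ι = S.card)
    (x : Fin n → ℝ) :
    ∑ g ∈ Finset.univ.filter
        (fun g : ι → Fin n => Finset.univ.image g = S ∧ g j0 = i),
      ∏ j ∈ Finset.univ.erase j0, x (g j)
      = if i ∈ S then ((S.card - 1).factorial : ℝ) * ∏ v ∈ S.erase i, x v else 0 := by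
  classical
  by_cases hi : i ∈ S
  · rw [if_pos hi]
    -- bijection with functions on {j // j ≠ j0} having image S.erase i
    have key : ∑ g ∈ Finset.univ.filter
          (fun g : ι → Fin n => Finset.univ.image g = S ∧ g j0 = i),
        ∏ j ∈ Finset.univ.erase j0, x (g j)
        = ∑ g' ∈ Finset.univ.filter
            (fun g' : {j : ι // j ≠ j0} → Fin n => Finset.univ.image g' = S.erase i),
          ∏ j, x (g' j) := by
      apply Finset.sum_nbij' (i := fun g => fun j : {j : ι // j ≠ j0} => g j)
        (j := fun g' => fun j : ι => if hj : j = j0 then i else g' ⟨j, hj⟩)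
      · intro g hg
        simp only [mem_filter, mem_univ, true_and] at hg ⊢
        have hginj : Set.InjOn g (Finset.univ : Finset ι) := by
          apply Finset.injOn_of_card_image_eq
          rw [hg.1, ← h, Finset.card_univ]
        ext v
        simp only [Finset.mem_image, mem_univ, true_and, Finset.mem_erase]
        constructor
        · rintro ⟨j, rfl⟩
          refine ⟨?_, hg.1 ▸ Finset.mem_image_of_mem g (mem_univ _)⟩
          intro hv
          exact j.2 (hginj (by simp) (by simp) (hv.trans hg.2.symm))
        · rintro ⟨hv, hvS⟩
          rw [← hg.1] at hvS
          obtain ⟨j, -, rfl⟩ := Finset.mem_image.1 hvS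
          have : j ≠ j0 := fun hj => hv (hj ▸ hg.2)
          exact ⟨⟨j, this⟩, rfl⟩
      · intro g' hg'
        simp only [mem_filter, mem_univ, true_and] at hg' ⊢
        constructor
        · ext v
          simp only [Finset.mem_image, mem_univ, true_and]
          constructor
          · rintro ⟨j, rfl⟩
            by_cases hj : j = j0
            · rw [dif_pos hj]; exact hi
            · rw [dif_neg hj]
              have hmem : g' ⟨j, hj⟩ ∈ S.erase i := by
                rw [← hg']; exact Finset.mem_image_of_mem g' (mem_univ _)
              exact Finset.mem_of_mem_erase hmem
          · intro hv
            by_cases hvi : v = i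
            · exact ⟨j0, by rw [dif_pos rfl, hvi]⟩
            · have : v ∈ S.erase i := Finset.mem_erase.2 ⟨hvi, hv⟩
              rw [← hg'] at this
              obtain ⟨j, -, rfl⟩ := Finset.mem_image.1 this
              refine ⟨j.1, ?_⟩
              rw [dif_neg j.2]
        · simp
      · intro g hg
        simp only [mem_filter, mem_univ, true_and] at hg
        funext j
        by_cases hj : j = j0
        · rw [dif_pos hj, hj]; exact hg.2.symm
        · rw [dif_neg hj]
      · intro g' hg'
        funext j
        exact dif_neg j.2
      · intro g hg
        exact Finset.prod_subtype _ (by simp) (fun j => x (g j))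
    have hcard : Fintype.card {j : ι // j ≠ j0} = (S.erase i).card := by
      have h1 : Fintype.card {j : ι // j ≠ j0} = Fintype.card ι - 1 := by
        simpa using Set.card_ne_eq j0
      rw [h1, h, Finset.card_erase_of_mem hi]
    rw [key, sum_prod_image_eq _ hcard x, Finset.card_erase_of_mem hi]
  · rw [if_neg hi]
    apply Finset.sum_eq_zero
    intro g hg
    simp only [mem_filter, mem_univ, true_and] at hg
    exact absurd (hg.2 ▸ hg.1 ▸ Finset.mem_image_of_mem g (mem_univ j0)) hi

lemma image_eq_image_subtype {α β : Type*} [DecidableEq α] [DecidableEq β]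
    [Fintype α] (B : Finset α) (f : α → β) :
    B.image f = Finset.univ.image (fun j : {j // j ∈ B} => f j) := by
  ext v
  simp only [Finset.mem_image, mem_univ, true_and, Subtype.exists]
  constructor
  · rintro ⟨j, hj, rfl⟩; exact ⟨j, hj, rfl⟩
  · rintro ⟨j, hj, rfl⟩; exact ⟨j, hj, rfl⟩

lemma image_compl_eq_image_subtype {α β : Type*} [DecidableEq α] [DecidableEq β]
    [Fintype α] (B : Finset α) (f : α → β) :
    Bᶜ.image f = Finset.univ.image (fun j : {j // ¬ j ∈ B} => f j) := by
  ext v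
  simp only [Finset.mem_image, mem_univ, true_and, Subtype.exists, Finset.mem_compl]
  constructor
  · rintro ⟨j, hj, rfl⟩; exact ⟨j, hj, rfl⟩
  · rintro ⟨j, hj, rfl⟩; exact ⟨j, hj, rfl⟩

lemma prod_erase_subtype {α : Type*} [DecidableEq α] [Fintype α]
    (B : Finset α) (j0 : α) (hj0 : j0 ∈ B) (F : α → ℝ) :
    ∏ j ∈ B.erase j0, F j
      = ∏ j ∈ (Finset.univ : Finset {j // j ∈ B}).erase ⟨j0, hj0⟩, F j := by
  refine Finset.prod_bij' (fun j hj => (⟨j, Finset.mem_of_mem_erase hj⟩ : {j // j ∈ B}))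
    (fun j' _ => (j' : α)) ?_ ?_ ?_ ?_ ?_
  · intro a ha
    simp only [Finset.mem_erase, mem_univ, and_true, ne_eq, Subtype.ext_iff]
    exact (Finset.mem_erase.1 ha).1
  · intro a ha
    rw [Finset.mem_erase] at ha ⊢
    exact ⟨fun hc => ha.1 (Subtype.ext hc), a.2⟩
  · intro a ha; rfl
  · intro a ha; rfl
  · intro a ha; rfl

lemma sum_prod_blocks {m n : ℕ} (B₁ B₂ : Finset (Fin m)) (hB : B₂ = B₁ᶜ)
    (T Hd : Finset (Fin n)) (hdisj : Disjoint T Hd)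
    (h1 : B₁.card = T.card) (h2 : B₂.card = Hd.card)
    (j0 : Fin m) (hj0 : j0 ∈ B₁) (i : Fin n) (x : Fin n → ℝ) :
    ∑ f ∈ Finset.univ.filter (fun f : Fin m → Fin n =>
        B₁.image f = T ∧ B₂.image f = Hd ∧ f j0 = i),
      ∏ j ∈ Finset.univ.erase j0, x (f j)
      = if i ∈ T then
          (((T.card - 1).factorial * Hd.card.factorial : ℕ) : ℝ)
            * ∏ v ∈ (T ∪ Hd).erase i, x v
        else 0 := by
  classical
  subst hB
  have hsplit : ∀ f : Fin m → Fin n,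
      (if B₁.image f = T ∧ B₁ᶜ.image f = Hd ∧ f j0 = i then
        ∏ j ∈ Finset.univ.erase j0, x (f j) else 0)
      = (if Finset.univ.image (fun j : {j // j ∈ B₁} => f j) = T ∧ f j0 = i then
            ∏ j ∈ (Finset.univ : Finset {j // j ∈ B₁}).erase ⟨j0, hj0⟩, x (f j) else 0)
        * (if Finset.univ.image (fun j : {j // ¬ j ∈ B₁} => f j) = Hd then
            ∏ j : {j // ¬ j ∈ B₁}, x (f j) else 0) := by
    intro f
    rw [← image_eq_image_subtype, ← image_compl_eq_image_subtype,
      ← prod_erase_subtype B₁ j0 hj0 (fun j => x (f j))]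
    by_cases hc1 : B₁.image f = T
    · by_cases hc2 : B₁ᶜ.image f = Hd
      · by_cases hc3 : f j0 = i
        · rw [if_pos ⟨hc1, hc2, hc3⟩, if_pos ⟨hc1, hc3⟩, if_pos hc2]
          have hpart : Finset.univ.erase j0 = (B₁.erase j0) ∪ B₁ᶜ := by
            ext j
            simp only [Finset.mem_erase, mem_univ, and_true, Finset.mem_union,
              Finset.mem_compl]
            constructor
            · intro hj
              by_cases hjB : j ∈ B₁
              · exact Or.inl ⟨hj, hjB⟩
              · exact Or.inr hjB
            · rintro (⟨hj, _⟩ | hj)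
              · exact hj
              · intro hjj; exact hj (hjj ▸ hj0)
          rw [hpart, Finset.prod_union (by
            refine Finset.disjoint_left.2 fun j hj hj' => ?_
            exact (Finset.mem_compl.1 hj') (Finset.mem_of_mem_erase hj))]
          rw [Finset.prod_subtype (p := fun j => ¬ j ∈ B₁) B₁ᶜ
            (fun j => Finset.mem_compl) (fun j => x (f j))]
        · simp [hc3]
      · simp [hc2]
    · simp [hc1]
  rw [Finset.sum_filter, Finset.sum_congr rfl (fun f _ => hsplit f)]
  rw [← Equiv.sum_comp (Equiv.piEquivPiSubtypeProd (fun j : Fin m => j ∈ B₁)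
      (fun _ => Fin n)).symm]
  rw [Fintype.sum_prod_type]
  have hres1 : ∀ (g : {j // j ∈ B₁} → Fin n) (h : {j // ¬ j ∈ B₁} → Fin n),
      (fun j : {j // j ∈ B₁} =>
        ((Equiv.piEquivPiSubtypeProd (fun j : Fin m => j ∈ B₁)
          (fun _ => Fin n)).symm (g, h)) ↑j) = g := by
    intro g h
    funext j
    simp [Equiv.piEquivPiSubtypeProd, j.2]
  have hres2 : ∀ (g : {j // j ∈ B₁} → Fin n) (h : {j // ¬ j ∈ B₁} → Fin n),
      (fun j : {j // ¬ j ∈ B₁} =>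
        ((Equiv.piEquivPiSubtypeProd (fun j : Fin m => j ∈ B₁)
          (fun _ => Fin n)).symm (g, h)) ↑j) = h := by
    intro g h
    funext j
    simp [Equiv.piEquivPiSubtypeProd, j.2]
  have hstep : ∀ (g : {j // j ∈ B₁} → Fin n) (h : {j // ¬ j ∈ B₁} → Fin n),
      ((if Finset.univ.image (fun j : {j // j ∈ B₁} =>
          ((Equiv.piEquivPiSubtypeProd (fun j : Fin m => j ∈ B₁)
            (fun _ => Fin n)).symm (g, h)) ↑j) = T ∧
          ((Equiv.piEquivPiSubtypeProd (fun j : Fin m => j ∈ B₁)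
            (fun _ => Fin n)).symm (g, h)) j0 = i then
          ∏ j ∈ (Finset.univ : Finset {j // j ∈ B₁}).erase ⟨j0, hj0⟩,
            x (((Equiv.piEquivPiSubtypeProd (fun j : Fin m => j ∈ B₁)
              (fun _ => Fin n)).symm (g, h)) ↑j) else 0)
        * (if Finset.univ.image (fun j : {j // ¬ j ∈ B₁} =>
            ((Equiv.piEquivPiSubtypeProd (fun j : Fin m => j ∈ B₁)
              (fun _ => Fin n)).symm (g, h)) ↑j) = Hd then
            ∏ j : {j // ¬ j ∈ B₁},
              x (((Equiv.piEquivPiSubtypeProd (fun j : Fin m => j ∈ B₁)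
                (fun _ => Fin n)).symm (g, h)) ↑j) else 0))
      = (if Finset.univ.image g = T ∧ g ⟨j0, hj0⟩ = i then
          ∏ j ∈ (Finset.univ : Finset {j // j ∈ B₁}).erase ⟨j0, hj0⟩, x (g j) else 0)
        * (if Finset.univ.image h = Hd then ∏ j : {j // ¬ j ∈ B₁}, x (h j) else 0) := by
    intro g h
    have h1' := hres1 g h
    have h2' := hres2 g h
    have hj0' : ((Equiv.piEquivPiSubtypeProd (fun j : Fin m => j ∈ B₁)
        (fun _ => Fin n)).symm (g, h)) j0 = g ⟨j0, hj0⟩ := by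
      have := congrFun h1' ⟨j0, hj0⟩
      simpa using this
    simp only [congrFun h1', congrFun h2', hj0']
  rw [Finset.sum_congr rfl (fun g _ => Finset.sum_congr rfl (fun h _ => hstep g h))]
  rw [← Finset.sum_mul_sum]
  have hG : (∑ g : {j // j ∈ B₁} → Fin n,
      if Finset.univ.image g = T ∧ g ⟨j0, hj0⟩ = i then
        ∏ j ∈ (Finset.univ : Finset {j // j ∈ B₁}).erase ⟨j0, hj0⟩, x (g j) else 0)
      = if i ∈ T then ((T.card - 1).factorial : ℝ) * ∏ v ∈ T.erase i, x v else 0 := by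
    rw [← Finset.sum_filter]
    exact sum_prod_image_pin (ι := {j // j ∈ B₁}) T ⟨j0, hj0⟩ i (by rw [Fintype.card_coe, h1]) x
  have hH : (∑ h : {j // ¬ j ∈ B₁} → Fin n,
      if Finset.univ.image h = Hd then ∏ j : {j // ¬ j ∈ B₁}, x (h j) else 0)
      = (Hd.card.factorial : ℝ) * ∏ v ∈ Hd, x v := by
    rw [← Finset.sum_filter]
    refine sum_prod_image_eq Hd ?_ x
    rw [Fintype.card_subtype]
    rw [show (Finset.univ.filter fun j : Fin m => ¬ j ∈ B₁) = B₁ᶜ by ext j; simp]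
    exact h2
  rw [hG, hH]
  by_cases hi : i ∈ T
  · rw [if_pos hi, if_pos hi]
    have hunion : (T ∪ Hd).erase i = (T.erase i) ∪ Hd := by
      ext v
      simp only [Finset.mem_erase, Finset.mem_union]
      constructor
      · rintro ⟨hv, (hv' | hv')⟩
        · exact Or.inl ⟨hv, hv'⟩
        · exact Or.inr hv'
      · rintro (⟨hv, hv'⟩ | hv)
        · exact ⟨hv, Or.inl hv'⟩
        · refine ⟨?_, Or.inr hv⟩
          rintro rfl
          exact (Finset.disjoint_left.1 hdisj) hi hv
    rw [hunion, Finset.prod_union (by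
      exact Finset.disjoint_of_subset_left (Finset.erase_subset _ _) hdisj)]
    push_cast
    ring
  · rw [if_neg hi, if_neg hi, zero_mul]


section D
variable {m n : ℕ}

lemma pinSum (B₁ B₂ : Finset (Fin m)) (hB : B₂ = B₁ᶜ)
    (T Hd : Finset (Fin n)) (hdisj : Disjoint T Hd)
    (h1 : B₁.card = T.card) (h2 : B₂.card = Hd.card)
    (j0 : Fin m) (hj0 : j0 ∈ B₁) (i : Fin n) (x : Fin n → ℝ) (c : ℝ) :
    ∑ f ∈ Finset.univ.filter (fun f : Fin m → Fin n => f j0 = i),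
      (if B₁.image f = T ∧ B₂.image f = Hd then c else 0)
        * ∏ j ∈ Finset.univ.erase j0, x (f j)
    = if i ∈ T then
        c * (((T.card - 1).factorial * Hd.card.factorial : ℕ) : ℝ)
          * ∏ v ∈ (T ∪ Hd).erase i, x v
      else 0 := by
  classical
  have hmain : ∑ f ∈ Finset.univ.filter (fun f : Fin m → Fin n => f j0 = i),
      (if B₁.image f = T ∧ B₂.image f = Hd then c else 0)
        * ∏ j ∈ Finset.univ.erase j0, x (f j)
      = c * ∑ f ∈ Finset.univ.filter (fun f : Fin m → Fin n =>
          B₁.image f = T ∧ B₂.image f = Hd ∧ f j0 = i),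
          ∏ j ∈ Finset.univ.erase j0, x (f j) := by
    rw [Finset.sum_filter, Finset.sum_filter, Finset.mul_sum]
    apply Finset.sum_congr rfl
    intro f _
    by_cases hc : B₁.image f = T ∧ B₂.image f = Hd
    · by_cases hp : f j0 = i
      · rw [if_pos hp, if_pos hc, if_pos ⟨hc.1, hc.2, hp⟩]
      · rw [if_neg hp, if_neg (fun hh => hp hh.2.2), mul_zero]
    · by_cases hp : f j0 = i
      · rw [if_pos hp, if_neg hc, if_neg (fun hh => hc ⟨hh.1, hh.2.1⟩), zero_mul, mul_zero]
      · rw [if_neg hp, if_neg (fun hh => hp hh.2.2), mul_zero]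
  rw [hmain, sum_prod_blocks B₁ B₂ hB T Hd hdisj h1 h2 j0 hj0 i x]
  by_cases hi : i ∈ T
  · rw [if_pos hi, if_pos hi, mul_assoc]
  · rw [if_neg hi, if_neg hi, mul_zero]

lemma pinSumSwap (B₁ B₂ : Finset (Fin m)) (hB : B₂ = B₁ᶜ)
    (T Hd : Finset (Fin n)) (hdisj : Disjoint T Hd)
    (h1 : B₁.card = T.card) (h2 : B₂.card = Hd.card)
    (j0 : Fin m) (hj0 : j0 ∈ B₂) (i : Fin n) (x : Fin n → ℝ) (c : ℝ) :
    ∑ f ∈ Finset.univ.filter (fun f : Fin m → Fin n => f j0 = i),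
      (if B₁.image f = T ∧ B₂.image f = Hd then c else 0)
        * ∏ j ∈ Finset.univ.erase j0, x (f j)
    = if i ∈ Hd then
        c * (((Hd.card - 1).factorial * T.card.factorial : ℕ) : ℝ)
          * ∏ v ∈ (T ∪ Hd).erase i, x v
      else 0 := by
  classical
  have hB' : B₁ = B₂ᶜ := by rw [hB, compl_compl]
  have := pinSum B₂ B₁ hB' Hd T hdisj.symm h2 h1 j0 hj0 i x c
  rw [Finset.union_comm T Hd]
  rw [← this]
  apply Finset.sum_congr rfl
  intro f _
  rw [if_congr and_comm rfl rfl]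

end D

section AuxD2

variable {m n : ℕ}

lemma card_filter_lt_fin (m k : ℕ) (hk : k ≤ m) :
    (Finset.univ.filter fun j : Fin m => (j : ℕ) < k).card = k := by
  have : (Finset.univ.filter fun j : Fin m => (j : ℕ) < k)
      = (Finset.range k).attachFin
          (fun x hx => lt_of_lt_of_le (Finset.mem_range.1 hx) hk) := by
    ext j
    simp [Finset.mem_attachFin]
  rw [this, Finset.card_attachFin, Finset.card_range]

lemma compl_filter_lt (m k : ℕ) :
    (Finset.univ.filter fun j : Fin m => k ≤ (j : ℕ))
      = (Finset.univ.filter fun j : Fin m => (j : ℕ) < k)ᶜ := by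
  ext j
  simp only [Finset.mem_filter, Finset.mem_univ, true_and, Finset.mem_compl]
  omega

lemma edge_cards (G : DirHypergraph n) (hG : G.IsUniform m)
    {e : Finset (Fin n) × Finset (Fin n)} (he : e ∈ G.edges) :
    e.1.card + e.2.card = m := by
  have h := hG e he
  rwa [Finset.card_union_of_disjoint (G.tail_head_disjoint e he)] at h

lemma fact_cancel₁ (a b : ℕ) :
    (1 : ℝ) / (((b.factorial * (a - 1).factorial : ℕ)) : ℝ)
      * (((a - 1).factorial * b.factorial : ℕ) : ℝ) = 1 := by
  rw [Nat.mul_comm b.factorial]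
  rw [one_div_mul_cancel]
  positivity

lemma fact_cancel₂ (a b : ℕ) (ha : 0 < a) (hb : 0 < b) :
    (b : ℝ) * ((1 : ℝ) / (((b.factorial * (a - 1).factorial : ℕ)) : ℝ)
      * (((b - 1).factorial * a.factorial : ℕ) : ℝ)) = a := by
  have hnat : b * ((b - 1).factorial * a.factorial)
      = a * (b.factorial * (a - 1).factorial) := by
    have hb' : b * (b - 1).factorial = b.factorial := Nat.mul_factorial_pred hb.ne'
    have ha' : a * (a - 1).factorial = a.factorial := Nat.mul_factorial_pred ha.ne'
    calc b * ((b - 1).factorial * a.factorial)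
        = (b * (b - 1).factorial) * a.factorial := by ring
      _ = b.factorial * (a * (a - 1).factorial) := by rw [hb', ← ha']
      _ = a * (b.factorial * (a - 1).factorial) := by ring
  have hne : (((b.factorial * (a - 1).factorial : ℕ)) : ℝ) ≠ 0 := by positivity
  field_simp
  exact_mod_cast hnat.trans (Nat.mul_comm _ _)

lemma fact_cancel₃ (a b : ℕ) (ha : 0 < a) (hb : 0 < b) :
    (a : ℝ) * ((1 : ℝ) / ((((b - 1).factorial * a.factorial : ℕ)) : ℝ)
      * (((a - 1).factorial * b.factorial : ℕ) : ℝ)) = b := by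
  rw [Nat.mul_comm (b - 1).factorial a.factorial]
  exact fact_cancel₂ b a hb ha

/-- The `i`-th entry of the (unnormalized) gradient of the form `A x^m`. -/
noncomputable def gradApply {m n : ℕ} (A : (Fin m → Fin n) → ℝ)
    (x : Fin n → ℝ) (i : Fin n) : ℝ :=
  ∑ f : Fin m → Fin n, A f *
    ∑ j ∈ Finset.univ.filter (fun j : Fin m => f j = i),
      ∏ j' ∈ Finset.univ.erase j, x (f j')

/-- Contribution of one edge to `(A_H x^{m-1})_i`. -/
noncomputable def eterm {n : ℕ} (x : Fin n → ℝ)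
    (e : Finset (Fin n) × Finset (Fin n)) (i : Fin n) : ℝ :=
  if i ∈ e.1 ∪ e.2 then ∏ v ∈ (e.1 ∪ e.2).erase i, x v else 0

lemma hm_edge_out (hm : 0 < m) (G : DirHypergraph n) (hG : G.IsUniform m)
    {e : Finset (Fin n) × Finset (Fin n)} (he : e ∈ G.edges)
    (x : Fin n → ℝ) (i : Fin n) :
    ∑ f ∈ Finset.univ.filter (fun f : Fin m → Fin n => f ⟨0, hm⟩ = i),
      (if ((Finset.univ.filter fun j : Fin m => (j : ℕ) < e.1.card).image f = e.1 ∧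
           (Finset.univ.filter fun j : Fin m => e.1.card ≤ (j : ℕ)).image f = e.2)
        then (1 : ℝ) / ((((m - e.1.card).factorial * (e.1.card - 1).factorial : ℕ)) : ℝ)
        else 0)
        * ∏ j ∈ Finset.univ.erase ⟨0, hm⟩, x (f j)
    = if i ∈ e.1 then ∏ v ∈ (e.1 ∪ e.2).erase i, x v else 0 := by
  classical
  have hcard := edge_cards G hG he
  have hk1 : 0 < e.1.card := Finset.card_pos.2 (G.tail_nonempty e he)
  have hk2 : 0 < e.2.card := Finset.card_pos.2 (G.head_nonempty e he)
  have hmk : m - e.1.card = e.2.card := by omega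
  have h1 : (Finset.univ.filter fun j : Fin m => (j : ℕ) < e.1.card).card = e.1.card :=
    card_filter_lt_fin m e.1.card (by omega)
  have h2 : (Finset.univ.filter fun j : Fin m => e.1.card ≤ (j : ℕ)).card = e.2.card := by
    rw [compl_filter_lt, Finset.card_compl, Fintype.card_fin, h1]; omega
  have hj0 : (⟨0, hm⟩ : Fin m) ∈ (Finset.univ.filter fun j : Fin m => (j : ℕ) < e.1.card) := by
    simp only [Finset.mem_filter, Finset.mem_univ, true_and]
    exact hk1
  rw [pinSum _ _ (compl_filter_lt m e.1.card) e.1 e.2 (G.tail_head_disjoint e he)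
    h1 h2 ⟨0, hm⟩ hj0 i x _]
  rw [hmk, fact_cancel₁ e.1.card e.2.card, one_mul]

lemma hm_edge_in (hm : 0 < m) (G : DirHypergraph n) (hG : G.IsUniform m)
    {e : Finset (Fin n) × Finset (Fin n)} (he : e ∈ G.edges)
    (x : Fin n → ℝ) (i : Fin n) :
    ∑ f ∈ Finset.univ.filter (fun f : Fin m → Fin n => f ⟨0, hm⟩ = i),
      (if ((Finset.univ.filter fun j : Fin m => (j : ℕ) < m - e.1.card).image f = e.2 ∧
           (Finset.univ.filter fun j : Fin m => m - e.1.card ≤ (j : ℕ)).image f = e.1)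
        then (1 : ℝ) / ((((m - e.1.card - 1).factorial * (e.1.card).factorial : ℕ)) : ℝ)
        else 0)
        * ∏ j ∈ Finset.univ.erase ⟨0, hm⟩, x (f j)
    = if i ∈ e.2 then ∏ v ∈ (e.1 ∪ e.2).erase i, x v else 0 := by
  classical
  have hcard := edge_cards G hG he
  have hk1 : 0 < e.1.card := Finset.card_pos.2 (G.tail_nonempty e he)
  have hk2 : 0 < e.2.card := Finset.card_pos.2 (G.head_nonempty e he)
  have h1 : (Finset.univ.filter fun j : Fin m => (j : ℕ) < m - e.1.card).card = e.2.card := by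
    rw [card_filter_lt_fin m (m - e.1.card) (by omega)]; omega
  have h2 : (Finset.univ.filter fun j : Fin m => m - e.1.card ≤ (j : ℕ)).card = e.1.card := by
    rw [compl_filter_lt, Finset.card_compl, Fintype.card_fin,
      card_filter_lt_fin m (m - e.1.card) (by omega)]
    omega
  have hj0 : (⟨0, hm⟩ : Fin m)
      ∈ (Finset.univ.filter fun j : Fin m => (j : ℕ) < m - e.1.card) := by
    simp only [Finset.mem_filter, Finset.mem_univ, true_and]
    omega
  rw [pinSum _ _ (compl_filter_lt m (m - e.1.card)) e.2 e.1
    (G.tail_head_disjoint e he).symm h1 h2 ⟨0, hm⟩ hj0 i x _]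
  have hmm : m - e.1.card - 1 = e.2.card - 1 := by omega
  rw [hmm, one_div_mul_cancel (by positivity), one_mul, Finset.union_comm e.2 e.1]

lemma hmApply_adj (hm : 0 < m) (G : DirHypergraph n) (hG : G.IsUniform m)
    (x : Fin n → ℝ) (i : Fin n) :
    hmApply hm (fun f => outAdj m G f + inAdj m G f) x i
      = ∑ e ∈ G.edges, eterm x e i := by
  classical
  unfold hmApply outAdj inAdj
  rw [show (Finset.univ.filter fun j : Fin m => j ≠ ⟨0, hm⟩)
      = Finset.univ.erase ⟨0, hm⟩ from Finset.filter_ne' _ _]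
  simp only [add_mul, Finset.sum_mul]
  rw [Finset.sum_add_distrib, Finset.sum_comm, Finset.sum_comm
    (s := Finset.univ.filter fun f : Fin m → Fin n => f ⟨0, hm⟩ = i) (t := G.edges)]
  rw [← Finset.sum_add_distrib]
  apply Finset.sum_congr rfl
  intro e he
  rw [hm_edge_out hm G hG he x i, hm_edge_in hm G hG he x i]
  unfold eterm
  by_cases h1 : i ∈ e.1
  · have h2 : ¬ i ∈ e.2 := fun hc => (Finset.disjoint_left.1
      (G.tail_head_disjoint e he)) h1 hc
    rw [if_pos h1, if_neg h2, if_pos (Finset.mem_union_left _ h1), add_zero]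
  · by_cases h2 : i ∈ e.2
    · rw [if_neg h1, if_pos h2, if_pos (Finset.mem_union_right _ h2), zero_add]
    · rw [if_neg h1, if_neg h2, if_neg (by simp [h1, h2]), add_zero]

end AuxD2

section AuxD3

variable {m n : ℕ}

lemma filter_not_lt (m k : ℕ) :
    (Finset.univ.filter fun j : Fin m => ¬ (j : ℕ) < k)
      = (Finset.univ.filter fun j : Fin m => k ≤ (j : ℕ)) := by
  ext j
  simp only [Finset.mem_filter, Finset.mem_univ, true_and]
  omega

lemma swap_sum_grad (W : (Fin m → Fin n) → ℝ) (x : Fin n → ℝ) (i : Fin n) :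
    (∑ f : Fin m → Fin n, W f *
        ∑ j ∈ Finset.univ.filter (fun j : Fin m => f j = i),
          ∏ j' ∈ Finset.univ.erase j, x (f j'))
    = ∑ j : Fin m, ∑ f ∈ Finset.univ.filter (fun f : Fin m → Fin n => f j = i),
        W f * ∏ j' ∈ Finset.univ.erase j, x (f j') := by
  classical
  simp only [Finset.mul_sum]
  have h1 : ∀ f : Fin m → Fin n,
      (∑ j ∈ Finset.univ.filter (fun j : Fin m => f j = i),
        W f * ∏ j' ∈ Finset.univ.erase j, x (f j'))
      = ∑ j : Fin m, if f j = i then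
          W f * ∏ j' ∈ Finset.univ.erase j, x (f j') else 0 := fun f =>
    Finset.sum_filter _ _
  rw [Finset.sum_congr rfl (fun f _ => h1 f), Finset.sum_comm]
  apply Finset.sum_congr rfl
  intro j _
  rw [← Finset.sum_filter]

lemma grad_edge_out (hm : 0 < m) (G : DirHypergraph n) (hG : G.IsUniform m)
    {e : Finset (Fin n) × Finset (Fin n)} (he : e ∈ G.edges)
    (x : Fin n → ℝ) (i : Fin n) :
    ∑ f : Fin m → Fin n,
      (if ((Finset.univ.filter fun j : Fin m => (j : ℕ) < e.1.card).image f = e.1 ∧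
           (Finset.univ.filter fun j : Fin m => e.1.card ≤ (j : ℕ)).image f = e.2)
        then (1 : ℝ) / ((((m - e.1.card).factorial * (e.1.card - 1).factorial : ℕ)) : ℝ)
        else 0)
        * ∑ j ∈ Finset.univ.filter (fun j : Fin m => f j = i),
            ∏ j' ∈ Finset.univ.erase j, x (f j')
    = (e.1.card : ℝ) * eterm x e i := by
  classical
  have hcard := edge_cards G hG he
  have hk1 : 0 < e.1.card := Finset.card_pos.2 (G.tail_nonempty e he)
  have hk2 : 0 < e.2.card := Finset.card_pos.2 (G.head_nonempty e he)
  have hmk : m - e.1.card = e.2.card := by omega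
  have h1 : (Finset.univ.filter fun j : Fin m => (j : ℕ) < e.1.card).card = e.1.card :=
    card_filter_lt_fin m e.1.card (by omega)
  have h2 : (Finset.univ.filter fun j : Fin m => e.1.card ≤ (j : ℕ)).card = e.2.card := by
    rw [compl_filter_lt, Finset.card_compl, Fintype.card_fin, h1]; omega
  rw [swap_sum_grad]
  rw [← Finset.sum_filter_add_sum_filter_not Finset.univ
    (fun j : Fin m => (j : ℕ) < e.1.card)]
  have hW1 : ∀ j ∈ Finset.univ.filter (fun j : Fin m => (j : ℕ) < e.1.card),
      (∑ f ∈ Finset.univ.filter (fun f : Fin m → Fin n => f j = i),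
        (if ((Finset.univ.filter fun j : Fin m => (j : ℕ) < e.1.card).image f = e.1 ∧
             (Finset.univ.filter fun j : Fin m => e.1.card ≤ (j : ℕ)).image f = e.2)
          then (1 : ℝ) / ((((m - e.1.card).factorial * (e.1.card - 1).factorial : ℕ)) : ℝ)
          else 0)
          * ∏ j' ∈ Finset.univ.erase j, x (f j'))
      = if i ∈ e.1 then
          (1 : ℝ) / ((((m - e.1.card).factorial * (e.1.card - 1).factorial : ℕ)) : ℝ)
            * (((e.1.card - 1).factorial * e.2.card.factorial : ℕ) : ℝ)
            * ∏ v ∈ (e.1 ∪ e.2).erase i, x v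
        else 0 := fun j hj =>
    pinSum _ _ (compl_filter_lt m e.1.card) e.1 e.2 (G.tail_head_disjoint e he)
      h1 h2 j hj i x _
  have hW2 : ∀ j ∈ Finset.univ.filter (fun j : Fin m => ¬ (j : ℕ) < e.1.card),
      (∑ f ∈ Finset.univ.filter (fun f : Fin m → Fin n => f j = i),
        (if ((Finset.univ.filter fun j : Fin m => (j : ℕ) < e.1.card).image f = e.1 ∧
             (Finset.univ.filter fun j : Fin m => e.1.card ≤ (j : ℕ)).image f = e.2)
          then (1 : ℝ) / ((((m - e.1.card).factorial * (e.1.card - 1).factorial : ℕ)) : ℝ)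
          else 0)
          * ∏ j' ∈ Finset.univ.erase j, x (f j'))
      = if i ∈ e.2 then
          (1 : ℝ) / ((((m - e.1.card).factorial * (e.1.card - 1).factorial : ℕ)) : ℝ)
            * (((e.2.card - 1).factorial * e.1.card.factorial : ℕ) : ℝ)
            * ∏ v ∈ (e.1 ∪ e.2).erase i, x v
        else 0 := by
    intro j hj
    rw [filter_not_lt] at hj
    exact pinSumSwap _ _ (compl_filter_lt m e.1.card) e.1 e.2
      (G.tail_head_disjoint e he) h1 h2 j hj i x _
  rw [Finset.sum_congr rfl hW1, Finset.sum_congr rfl hW2, Finset.sum_const,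
    Finset.sum_const, h1, filter_not_lt, h2]
  unfold eterm
  by_cases hi1 : i ∈ e.1
  · have hi2 : ¬ i ∈ e.2 := fun hc => (Finset.disjoint_left.1
      (G.tail_head_disjoint e he)) hi1 hc
    rw [if_pos hi1, if_neg hi2, if_pos (Finset.mem_union_left _ hi1), smul_zero,
      add_zero, nsmul_eq_mul, hmk]
    congr 1
    rw [fact_cancel₁ e.1.card e.2.card, one_mul]
  · by_cases hi2 : i ∈ e.2
    · rw [if_neg hi1, if_pos hi2, if_pos (Finset.mem_union_right _ hi2), smul_zero,
        zero_add, nsmul_eq_mul]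
      rw [hmk, ← mul_assoc]
      rw [fact_cancel₂ e.1.card e.2.card hk1 hk2]
    · rw [if_neg hi1, if_neg hi2, if_neg (by simp [hi1, hi2]), smul_zero, smul_zero,
        add_zero, mul_zero]

lemma grad_edge_in (hm : 0 < m) (G : DirHypergraph n) (hG : G.IsUniform m)
    {e : Finset (Fin n) × Finset (Fin n)} (he : e ∈ G.edges)
    (x : Fin n → ℝ) (i : Fin n) :
    ∑ f : Fin m → Fin n,
      (if ((Finset.univ.filter fun j : Fin m => (j : ℕ) < m - e.1.card).image f = e.2 ∧
           (Finset.univ.filter fun j : Fin m => m - e.1.card ≤ (j : ℕ)).image f = e.1)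
        then (1 : ℝ) / ((((m - e.1.card - 1).factorial * (e.1.card).factorial : ℕ)) : ℝ)
        else 0)
        * ∑ j ∈ Finset.univ.filter (fun j : Fin m => f j = i),
            ∏ j' ∈ Finset.univ.erase j, x (f j')
    = (e.2.card : ℝ) * eterm x e i := by
  classical
  have hcard := edge_cards G hG he
  have hk1 : 0 < e.1.card := Finset.card_pos.2 (G.tail_nonempty e he)
  have hk2 : 0 < e.2.card := Finset.card_pos.2 (G.head_nonempty e he)
  have hmk : m - e.1.card - 1 = e.2.card - 1 := by omega
  have h1 : (Finset.univ.filter fun j : Fin m => (j : ℕ) < m - e.1.card).card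
      = e.2.card := by
    rw [card_filter_lt_fin m (m - e.1.card) (by omega)]; omega
  have h2 : (Finset.univ.filter fun j : Fin m => m - e.1.card ≤ (j : ℕ)).card
      = e.1.card := by
    rw [compl_filter_lt, Finset.card_compl, Fintype.card_fin,
      card_filter_lt_fin m (m - e.1.card) (by omega)]
    omega
  rw [swap_sum_grad]
  rw [← Finset.sum_filter_add_sum_filter_not Finset.univ
    (fun j : Fin m => (j : ℕ) < m - e.1.card)]
  have hW1 : ∀ j ∈ Finset.univ.filter (fun j : Fin m => (j : ℕ) < m - e.1.card),
      (∑ f ∈ Finset.univ.filter (fun f : Fin m → Fin n => f j = i),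
        (if ((Finset.univ.filter fun j : Fin m => (j : ℕ) < m - e.1.card).image f = e.2 ∧
             (Finset.univ.filter fun j : Fin m => m - e.1.card ≤ (j : ℕ)).image f = e.1)
          then (1 : ℝ) / ((((m - e.1.card - 1).factorial * (e.1.card).factorial : ℕ)) : ℝ)
          else 0)
          * ∏ j' ∈ Finset.univ.erase j, x (f j'))
      = if i ∈ e.2 then
          (1 : ℝ) / ((((m - e.1.card - 1).factorial * (e.1.card).factorial : ℕ)) : ℝ)
            * (((e.2.card - 1).factorial * e.1.card.factorial : ℕ) : ℝ)
            * ∏ v ∈ (e.2 ∪ e.1).erase i, x v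
        else 0 := fun j hj =>
    pinSum _ _ (compl_filter_lt m (m - e.1.card)) e.2 e.1
      (G.tail_head_disjoint e he).symm h1 h2 j hj i x _
  have hW2 : ∀ j ∈ Finset.univ.filter (fun j : Fin m => ¬ (j : ℕ) < m - e.1.card),
      (∑ f ∈ Finset.univ.filter (fun f : Fin m → Fin n => f j = i),
        (if ((Finset.univ.filter fun j : Fin m => (j : ℕ) < m - e.1.card).image f = e.2 ∧
             (Finset.univ.filter fun j : Fin m => m - e.1.card ≤ (j : ℕ)).image f = e.1)
          then (1 : ℝ) / ((((m - e.1.card - 1).factorial * (e.1.card).factorial : ℕ)) : ℝ)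
          else 0)
          * ∏ j' ∈ Finset.univ.erase j, x (f j'))
      = if i ∈ e.1 then
          (1 : ℝ) / ((((m - e.1.card - 1).factorial * (e.1.card).factorial : ℕ)) : ℝ)
            * (((e.1.card - 1).factorial * e.2.card.factorial : ℕ) : ℝ)
            * ∏ v ∈ (e.2 ∪ e.1).erase i, x v
        else 0 := by
    intro j hj
    rw [filter_not_lt] at hj
    exact pinSumSwap _ _ (compl_filter_lt m (m - e.1.card)) e.2 e.1
      (G.tail_head_disjoint e he).symm h1 h2 j hj i x _
  rw [Finset.sum_congr rfl hW1, Finset.sum_congr rfl hW2, Finset.sum_const,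
    Finset.sum_const, h1, filter_not_lt, h2, Finset.union_comm e.2 e.1]
  unfold eterm
  by_cases hi2 : i ∈ e.2
  · have hi1 : ¬ i ∈ e.1 := fun hc => (Finset.disjoint_left.1
      (G.tail_head_disjoint e he)) hc hi2
    rw [if_pos hi2, if_neg hi1, if_pos (Finset.mem_union_right _ hi2), smul_zero,
      add_zero, nsmul_eq_mul, hmk]
    congr 1
    rw [one_div_mul_cancel (by positivity), one_mul]
  · by_cases hi1 : i ∈ e.1
    · rw [if_neg hi2, if_pos hi1, if_pos (Finset.mem_union_left _ hi1), smul_zero,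
        zero_add, nsmul_eq_mul]
      rw [hmk, ← mul_assoc]
      rw [fact_cancel₃ e.1.card e.2.card hk1 hk2]
    · rw [if_neg hi1, if_neg hi2, if_neg (by simp [hi1, hi2]), smul_zero, smul_zero,
        add_zero, mul_zero]

lemma gradApply_adj (hm : 0 < m) (G : DirHypergraph n) (hG : G.IsUniform m)
    (x : Fin n → ℝ) (i : Fin n) :
    gradApply (fun f => outAdj m G f + inAdj m G f) x i
      = (m : ℝ) * hmApply hm (fun f => outAdj m G f + inAdj m G f) x i := by
  classical
  rw [hmApply_adj hm G hG x i]
  unfold gradApply outAdj inAdj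
  simp only [add_mul, Finset.sum_mul]
  rw [Finset.sum_add_distrib, Finset.sum_comm, Finset.sum_comm
    (s := (Finset.univ : Finset (Fin m → Fin n))) (t := G.edges)]
  rw [Finset.sum_congr rfl (fun e he => grad_edge_out hm G hG he x i),
    Finset.sum_congr rfl (fun e he => grad_edge_in hm G hG he x i),
    ← Finset.sum_add_distrib, Finset.mul_sum]
  apply Finset.sum_congr rfl
  intro e he
  have hcard := edge_cards G hG he
  rw [← add_mul]
  congr 1
  exact_mod_cast congrArg (Nat.cast : ℕ → ℝ) hcard

section AuxE

variable {m n : ℕ}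

lemma formEval_eq_sum_hm (hm : 0 < m) (A : (Fin m → Fin n) → ℝ) (x : Fin n → ℝ) :
    formEval A x = ∑ i, x i * hmApply hm A x i := by
  classical
  have h1 : ∀ i, x i * hmApply hm A x i
      = ∑ f ∈ Finset.univ.filter (fun f : Fin m → Fin n => f ⟨0, hm⟩ = i),
          A f * ∏ j, x (f j) := by
    intro i
    unfold hmApply
    rw [Finset.mul_sum]
    apply Finset.sum_congr rfl
    intro f hf
    simp only [Finset.mem_filter, Finset.mem_univ, true_and] at hf
    rw [show (Finset.univ.filter fun j : Fin m => j ≠ ⟨0, hm⟩)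
        = Finset.univ.erase ⟨0, hm⟩ from Finset.filter_ne' _ _]
    rw [← Finset.mul_prod_erase Finset.univ (fun j => x (f j))
      (Finset.mem_univ (⟨0, hm⟩ : Fin m)), hf]
    ring
  rw [Finset.sum_congr rfl (fun i _ => h1 i),
    Finset.sum_fiberwise_of_maps_to (fun f _ => Finset.mem_univ (f ⟨0, hm⟩))]
  rfl

/-- The derivative of `formEval A` at `x`, as a continuous linear map. -/
noncomputable def gradCLM (A : (Fin m → Fin n) → ℝ) (x : Fin n → ℝ) :
    (Fin n → ℝ) →L[ℝ] ℝ :=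
  ∑ f : Fin m → Fin n, A f • (∑ j : Fin m,
    (∏ j' ∈ Finset.univ.erase j, x (f j')) •
      (ContinuousLinearMap.proj (R := ℝ) (φ := fun _ : Fin n => ℝ) (f j)))

lemma hasStrictFDerivAt_formEval (A : (Fin m → Fin n) → ℝ) (x : Fin n → ℝ) :
    HasStrictFDerivAt (formEval A) (gradCLM A x) x := by
  classical
  have hmain : HasStrictFDerivAt
      (fun y : Fin n → ℝ => ∑ f : Fin m → Fin n, A f * ∏ j, y (f j))
      (gradCLM A x) x := by
    unfold gradCLM
    apply HasStrictFDerivAt.fun_sum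
    intro f _
    have hprod := HasStrictFDerivAt.finset_prod
      (u := (Finset.univ : Finset (Fin m)))
      (g := fun j (y : Fin n → ℝ) => y (f j))
      (g' := fun j => ContinuousLinearMap.proj (R := ℝ) (φ := fun _ : Fin n => ℝ) (f j))
      (x := x)
      (fun j _ => by exact (ContinuousLinearMap.proj (R := ℝ) (φ := fun _ : Fin n => ℝ) (f j)).hasStrictFDerivAt)
    exact hprod.const_mul (A f)
  exact hmain

lemma gradCLM_apply (A : (Fin m → Fin n) → ℝ) (x y : Fin n → ℝ) :
    gradCLM A x y = ∑ f : Fin m → Fin n, A f *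
      ∑ j : Fin m, (∏ j' ∈ Finset.univ.erase j, x (f j')) * y (f j) := by
  unfold gradCLM
  simp [ContinuousLinearMap.sum_apply, ContinuousLinearMap.smul_apply,
    ContinuousLinearMap.proj_apply, smul_eq_mul, Finset.mul_sum]

lemma gradCLM_single (A : (Fin m → Fin n) → ℝ) (x : Fin n → ℝ) (i : Fin n) :
    gradCLM A x (Pi.single i 1) = gradApply A x i := by
  classical
  rw [gradCLM_apply]
  unfold gradApply
  apply Finset.sum_congr rfl
  intro f _
  congr 1
  rw [Finset.sum_filter]
  apply Finset.sum_congr rfl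
  intro j _
  by_cases hj : f j = i
  · rw [if_pos hj, hj, Pi.single_eq_same, mul_one]
  · rw [if_neg hj, Pi.single_eq_of_ne hj, mul_zero]

lemma gradCLM_self (A : (Fin m → Fin n) → ℝ) (x : Fin n → ℝ) :
    gradCLM A x x = (m : ℝ) * formEval A x := by
  classical
  rw [gradCLM_apply]
  unfold formEval
  rw [Finset.mul_sum]
  apply Finset.sum_congr rfl
  intro f _
  have hterm : ∀ j : Fin m,
      (∏ j' ∈ Finset.univ.erase j, x (f j')) * x (f j) = ∏ j', x (f j') := by
    intro j
    rw [mul_comm]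
    exact Finset.mul_prod_erase Finset.univ (fun j' => x (f j')) (Finset.mem_univ j)
  rw [Finset.sum_congr rfl (fun j _ => hterm j), Finset.sum_const,
    Finset.card_univ, Fintype.card_fin, nsmul_eq_mul]
  ring

lemma exists_zmax_pair (hm : 0 < m) (hn : 0 < n) (A : (Fin m → Fin n) → ℝ)
    (hgrad : ∀ x i, gradApply A x i = (m : ℝ) * hmApply hm A x i) :
    ∃ lam x, IsZEigenpair hm A lam x ∧
      ∀ y : Fin n → ℝ, (∑ i, (y i) ^ 2 = 1) → formEval A y ≤ lam := by
  classical
  set Sph : Set (Fin n → ℝ) := {y | ∑ i, (y i) ^ 2 = 1} with hSph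
  have hx0 : Pi.single (⟨0, hn⟩ : Fin n) 1 ∈ Sph := by
    simp only [hSph, Set.mem_setOf_eq, Pi.single_apply]
    rw [Finset.sum_eq_single (⟨0, hn⟩ : Fin n)]
    · simp
    · intro b _ hb
      rw [if_neg hb]
      ring
    · intro h
      exact absurd (Finset.mem_univ _) h
  have hφcont : Continuous (fun y : Fin n → ℝ => ∑ i, (y i) ^ 2) :=
    continuous_finset_sum _ fun i _ => (continuous_apply i).pow 2
  have hclosed : IsClosed Sph := isClosed_eq hφcont continuous_const
  have hbdd : Bornology.IsBounded Sph := by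
    apply (Metric.isBounded_closedBall (x := (0 : Fin n → ℝ)) (r := 1)).subset
    intro y hy
    rw [Metric.mem_closedBall, dist_zero_right]
    rw [pi_norm_le_iff_of_nonneg (by norm_num)]
    intro i
    rw [Real.norm_eq_abs, ← abs_one]
    rw [abs_one]
    have hsq : (y i) ^ 2 ≤ 1 := by
      rw [← hy]
      exact Finset.single_le_sum (fun j _ => sq_nonneg (y j)) (Finset.mem_univ i)
    exact abs_le_one_iff_mul_self_le_one.2 (by nlinarith)
  have hK : IsCompact Sph := Metric.isCompact_of_isClosed_isBounded hclosed hbdd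
  have hg : Continuous (formEval A) := by
    unfold formEval
    exact continuous_finset_sum _ fun f _ =>
      continuous_const.mul (continuous_finset_prod _ fun j _ => continuous_apply (f j))
  obtain ⟨x, hxS, hmax⟩ := hK.exists_isMaxOn ⟨_, hx0⟩ hg.continuousOn
  have hxS' : ∑ i, (x i) ^ 2 = 1 := hxS
  set φf : (Fin n → ℝ) → ℝ := fun y => ∑ i, y i * y i with hφf
  have hφx : φf x = 1 := by
    rw [hφf]
    simp only
    rw [← hxS']
    apply Finset.sum_congr rfl
    intro i _
    ring
  have hset : {y | φf y = φf x} = Sph := by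
    rw [hφx]
    ext y
    simp only [hSph, Set.mem_setOf_eq, hφf]
    constructor
    · intro hy
      rw [← hy]
      exact Finset.sum_congr rfl fun i _ => by ring
    · intro hy
      rw [← hy]
      exact Finset.sum_congr rfl fun i _ => by ring
  have hextr : IsLocalExtrOn (formEval A) {y | φf y = φf x} x := by
    rw [hset]
    exact hmax.localize.isExtr
  have hφ' : HasStrictFDerivAt φf (∑ i : Fin n, (2 * x i) •
      (ContinuousLinearMap.proj (R := ℝ) (φ := fun _ : Fin n => ℝ) i)) x := by
    apply HasStrictFDerivAt.fun_sum
    intro i _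
    have hmul := ((ContinuousLinearMap.proj (R := ℝ) (φ := fun _ : Fin n => ℝ)
      i).hasStrictFDerivAt (x := x)).mul
      ((ContinuousLinearMap.proj (R := ℝ) (φ := fun _ : Fin n => ℝ)
        i).hasStrictFDerivAt (x := x))
    refine hmul.congr_fderiv ?_
    simp only [ContinuousLinearMap.proj_apply]
    rw [two_mul, add_smul]
  obtain ⟨a, b, hab, heq⟩ :=
    hextr.exists_multipliers_of_hasStrictFDerivAt_1d hφ' (hasStrictFDerivAt_formEval A x)
  have hy : ∀ y : Fin n → ℝ,
      a * (∑ i, (2 * x i) * y i) + b * gradCLM A x y = 0 := by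
    intro y
    have := congrArg (fun L : (Fin n → ℝ) →L[ℝ] ℝ => L y) heq
    simpa [ContinuousLinearMap.add_apply, ContinuousLinearMap.smul_apply,
      ContinuousLinearMap.sum_apply, ContinuousLinearMap.proj_apply,
      smul_eq_mul, Finset.mul_sum] using this
  have hsum2 : ∑ i, (2 * x i) * x i = 2 := by
    have : ∑ i, (2 * x i) * x i = 2 * ∑ i, (x i) ^ 2 := by
      rw [Finset.mul_sum]
      exact Finset.sum_congr rfl fun i _ => by ring
    rw [this, hxS', mul_one]
  have hb : b ≠ 0 := by
    intro hb0
    have h2 := hy x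
    rw [hb0, zero_mul, add_zero, hsum2] at h2
    have ha : a = 0 := by linarith
    exact hab (by rw [ha, hb0]; rfl)
  have hmR : (m : ℝ) ≠ 0 := Nat.cast_ne_zero.2 (by omega)
  set lam := formEval A x with hlam
  have h2 : a * 2 + b * ((m : ℝ) * lam) = 0 := by
    have := hy x
    rwa [hsum2, gradCLM_self] at this
  refine ⟨lam, x, ⟨?_, hxS'⟩, fun y hy' => hmax hy'⟩
  intro i
  have h1 : a * (2 * x i) + b * ((m : ℝ) * hmApply hm A x i) = 0 := by
    have hh := hy (Pi.single i 1)
    rw [gradCLM_single, hgrad] at hh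
    have hsing : ∑ j, (2 * x j) * (Pi.single i 1 : Fin n → ℝ) j = 2 * x i := by
      rw [Finset.sum_eq_single i]
      · rw [Pi.single_eq_same, mul_one]
      · intro b' _ hb'
        rw [Pi.single_eq_of_ne hb', mul_zero]
      · intro h
        exact absurd (Finset.mem_univ _) h
    rwa [hsing] at hh
  have hbm : b * (m : ℝ) ≠ 0 := mul_ne_zero hb hmR
  apply mul_left_cancel₀ hbm
  linear_combination h1 - x i * h2

end AuxE

section AuxF

variable {m n : ℕ}

lemma formEval_single_zero (hm : 0 < m) (G : DirHypergraph n) (hG : G.IsUniform m)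
    (v : Fin n) :
    formEval (fun f => outAdj m G f + inAdj m G f) (Pi.single v 1) = 0 := by
  classical
  unfold formEval
  apply Finset.sum_eq_zero
  intro f _
  by_cases hf : ∀ j, f j = v
  · have hA : outAdj m G f + inAdj m G f = 0 := by
      unfold outAdj inAdj
      rw [Finset.sum_eq_zero, Finset.sum_eq_zero, add_zero]
      · intro e he
        rw [if_neg]
        rintro ⟨hT, hH⟩
        have hcard := edge_cards G hG he
        have hk1 : 0 < e.1.card := Finset.card_pos.2 (G.tail_nonempty e he)
        have hk2 : 0 < e.2.card := Finset.card_pos.2 (G.head_nonempty e he)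
        have hv2 : v ∈ e.2 := by
          rw [← hT]
          refine Finset.mem_image.2 ⟨⟨0, hm⟩, ?_, hf _⟩
          simp only [Finset.mem_filter, Finset.mem_univ, true_and]
          omega
        have hv1 : v ∈ e.1 := by
          rw [← hH]
          refine Finset.mem_image.2 ⟨⟨m - e.1.card, by omega⟩, ?_, hf _⟩
          simp only [Finset.mem_filter, Finset.mem_univ, true_and]
          exact le_refl _
        exact (Finset.disjoint_left.1 (G.tail_head_disjoint e he)) hv1 hv2
      · intro e he
        rw [if_neg]
        rintro ⟨hT, hH⟩
        have hcard := edge_cards G hG he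
        have hk1 : 0 < e.1.card := Finset.card_pos.2 (G.tail_nonempty e he)
        have hk2 : 0 < e.2.card := Finset.card_pos.2 (G.head_nonempty e he)
        have hv1 : v ∈ e.1 := by
          rw [← hT]
          refine Finset.mem_image.2 ⟨⟨0, hm⟩, ?_, hf _⟩
          simp only [Finset.mem_filter, Finset.mem_univ, true_and]
          omega
        have hv2 : v ∈ e.2 := by
          rw [← hH]
          refine Finset.mem_image.2 ⟨⟨e.1.card, by omega⟩, ?_, hf _⟩
          simp only [Finset.mem_filter, Finset.mem_univ, true_and]
          exact le_refl _
        exact (Finset.disjoint_left.1 (G.tail_head_disjoint e he)) hv1 hv2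
    show (outAdj m G f + inAdj m G f) * ∏ j, (Pi.single v 1 : Fin n → ℝ) (f j) = 0
    rw [hA, zero_mul]
  · push_neg at hf
    obtain ⟨j, hj⟩ := hf
    rw [Finset.prod_eq_zero (Finset.mem_univ j) (Pi.single_eq_of_ne hj 1), mul_zero]

lemma lam_eq_formEval (hm : 0 < m) {A : (Fin m → Fin n) → ℝ} {lam : ℝ}
    {x : Fin n → ℝ} (hpair : IsZEigenpair hm A lam x) :
    lam = formEval A x := by
  rw [formEval_eq_sum_hm hm A x,
    Finset.sum_congr rfl (fun i _ => by rw [hpair.1 i])]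
  have h1 : ∑ i, x i * (lam * x i) = lam * ∑ i, (x i) ^ 2 := by
    rw [Finset.mul_sum]
    exact Finset.sum_congr rfl fun i _ => by ring
  rw [h1, hpair.2, mul_one]

lemma zMax_bound (hm : 0 < m) (hn : 0 < n) (G : DirHypergraph n)
    (hG : G.IsUniform m) :
    (0 ≤ zMax hm (fun f => outAdj m G f + inAdj m G f)) ∧
    ∀ y : Fin n → ℝ, (∑ i, (y i) ^ 2 = 1) →
      formEval (fun f => outAdj m G f + inAdj m G f) y
        ≤ zMax hm (fun f => outAdj m G f + inAdj m G f) := by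
  classical
  set A := fun f => outAdj m G f + inAdj m G f with hA
  obtain ⟨lam, x, hpair, hmaxall⟩ := exists_zmax_pair hm hn A
    (fun x i => gradApply_adj hm G hG x i)
  have hbdd : BddAbove {lam' | ∃ x', IsZEigenpair hm A lam' x'} := by
    refine ⟨lam, ?_⟩
    rintro lam' ⟨x', hpair'⟩
    rw [lam_eq_formEval hm hpair']
    exact hmaxall x' hpair'.2
  have hle : lam ≤ zMax hm A := le_csSup hbdd ⟨x, hpair⟩
  have hsingle : Pi.single (⟨0, hn⟩ : Fin n) 1 ∈ {y : Fin n → ℝ | ∑ i, (y i) ^ 2 = 1} := by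
    simp only [Set.mem_setOf_eq, Pi.single_apply]
    rw [Finset.sum_eq_single (⟨0, hn⟩ : Fin n)]
    · simp
    · intro b _ hb
      rw [if_neg hb]
      ring
    · intro h
      exact absurd (Finset.mem_univ _) h
  constructor
  · have h0 : (0 : ℝ) = formEval A (Pi.single (⟨0, hn⟩ : Fin n) 1) :=
      (formEval_single_zero hm G hG _).symm
    calc (0 : ℝ) = formEval A (Pi.single (⟨0, hn⟩ : Fin n) 1) := h0
      _ ≤ lam := hmaxall _ hsingle
      _ ≤ zMax hm A := hle
  · intro y hy
    exact le_trans (hmaxall y hy) hle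

end AuxF

/-- If the edge set of a directed `m`-uniform hypergraph
`H` (`m` even) is partitioned among directed spanning subhypergraphs
`H₁, …, H_p`, then `λ_max^Z(A_H) ≤ Σᵢ λ_max^Z(A_{Hᵢ})`, where
`A_G = A_G⁺ + A_G⁻`. -/
theorem zMax_le_sum_zMax_of_partition {m n p : ℕ} (hm : 0 < m) (heven : Even m)
    (H : DirHypergraph n) (hH : H.IsUniform m)
    (Hs : Fin p → DirHypergraph n)
    (hsub : ∀ i, (Hs i).edges ⊆ H.edges)
    (hdis : ∀ i j, i ≠ j → Disjoint (Hs i).edges (Hs j).edges)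
    (hcov : ∀ e, e ∈ H.edges ↔ ∃ i, e ∈ (Hs i).edges) :
    zMax hm (fun f => outAdj m H f + inAdj m H f) ≤
      ∑ i, zMax hm (fun f => outAdj m (Hs i) f + inAdj m (Hs i) f) := by
    classical
  by_cases hn : 0 < n
  · have hHs_unif : ∀ i, (Hs i).IsUniform m := fun i e he => hH e (hsub i he)
    have hedges : H.edges = Finset.univ.biUnion (fun i => (Hs i).edges) := by
      ext e
      simp only [Finset.mem_biUnion, Finset.mem_univ, true_and]
      exact hcov e
    have hAH : ∀ f : Fin m → Fin n, outAdj m H f + inAdj m H f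
        = ∑ i, (outAdj m (Hs i) f + inAdj m (Hs i) f) := by
      intro f
      unfold outAdj inAdj
      rw [Finset.sum_add_distrib]
      congr 1
      · rw [hedges, Finset.sum_biUnion (fun i _ j _ hij => hdis i j hij)]
      · rw [hedges, Finset.sum_biUnion (fun i _ j _ hij => hdis i j hij)]
    apply Real.sSup_le
    · rintro lam ⟨x, hpair⟩
      have hlam := lam_eq_formEval hm hpair
      have hsplit : formEval (fun f => outAdj m H f + inAdj m H f) x
          = ∑ i, formEval (fun f => outAdj m (Hs i) f + inAdj m (Hs i) f) x := by
        unfold formEval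
        simp only [hAH, Finset.sum_mul]
        exact Finset.sum_comm
      rw [hlam, hsplit]
      apply Finset.sum_le_sum
      intro i _
      exact (zMax_bound hm hn (Hs i) (hHs_unif i)).2 x hpair.2
    · apply Finset.sum_nonneg
      intro i _
      exact (zMax_bound hm hn (Hs i) (hHs_unif i)).1
  · have hzero : ∀ A : (Fin m → Fin n) → ℝ, zMax hm A = 0 := by
      intro A
      unfold zMax
      have hempty : {lam : ℝ | ∃ x : Fin n → ℝ, IsZEigenpair hm A lam x} = ∅ := by
        ext lam
        simp only [Set.mem_setOf_eq, Set.mem_empty_iff_false, iff_false, not_exists]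
        rintro x ⟨h1, h2⟩
        have hn0 : n = 0 := by omega
        subst hn0
        simp at h2
      rw [hempty, Real.sSup_empty]
    rw [hzero]
    simp [hzero]
end AuxD3
end

section
/- Let H be a directed m-uniform hypergraph on n vertices, and let L_H = L_H⁺ + L_H⁻ and 𝕃_H = 𝕃_H⁺ + 𝕃_H⁻. Let L_{H_D} = D_{H_D} − A_{H_D} and 𝕃_{H_D} = D_{H_D} + A_{H_D} be the Laplacian and signless Laplacian hypermatrices of the underlying undirected hypergraph H_D. Then L_H and L_{H_D} are isospectral (have the same eigenvalues), and 𝕃_H and 𝕃_{H_D} are isospectral. -/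
open Finset

variable {n : ℕ}

section Helpers
open Finset
variable {α β : Type*} [DecidableEq α] [Fintype α] [DecidableEq β] [Fintype β]

open scoped Classical in
lemma mySum1 {α β : Type*} [DecidableEq α] [Fintype α] [DecidableEq β] [Fintype β]
    (x : β → ℂ) (b₀ : β) :
    ∀ (T : Finset α) (S : Finset β), T.card = S.card →
      ∑ f ∈ univ.filter (fun f : α → β => T.image f = S ∧ ∀ a ∉ T, f a = b₀),
        ∏ j ∈ T, x (f j) = (S.card.factorial : ℂ) * ∏ v ∈ S, x v := by
  intro T
  induction T using Finset.induction_on with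
  | empty =>
    intro S hS
    have hSe : S = ∅ := Finset.card_eq_zero.mp (by simpa using hS.symm)
    subst hSe
    have h : (univ.filter (fun f : α → β =>
        (∅ : Finset α).image f = (∅ : Finset β) ∧ ∀ a ∉ (∅ : Finset α), f a = b₀))
        = {fun _ => b₀} := by
      ext f
      simp [funext_iff]
    rw [h]
    simp
  | @insert a T' ha ih =>
    intro S hS
    have hScard : S.card = T'.card + 1 := by
      rw [← hS, card_insert_of_notMem ha]
    have hpart : (univ.filter (fun f : α → β =>
        (insert a T').image f = S ∧ ∀ b ∉ insert a T', f b = b₀))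
        = S.biUnion (fun s => univ.filter (fun f : α → β =>
            f a = s ∧ T'.image f = S.erase s ∧ ∀ b ∉ insert a T', f b = b₀)) := by
      ext f
      simp only [mem_filter, mem_univ, true_and, mem_biUnion]
      constructor
      · rintro ⟨h1, h2⟩
        have hfa : f a ∈ S := h1 ▸ mem_image_of_mem f (mem_insert_self a T')
        have hinj : Set.InjOn f (insert a T' : Finset α) :=
          Finset.injOn_of_card_image_eq (by rw [h1, hS])
        refine ⟨f a, hfa, rfl, ?_, h2⟩
        have hsub : T'.image f ⊆ S.erase (f a) := by
          intro v hv
          obtain ⟨j, hj, rfl⟩ := mem_image.mp hv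
          refine mem_erase.mpr ⟨?_, h1 ▸ mem_image_of_mem f (mem_insert_of_mem hj)⟩
          intro hEq
          exact ha (by
            have hje : j = a := hinj (by simp [hj]) (by simp) hEq
            rwa [hje] at hj)
        have hmono : (T' : Set α) ⊆ (insert a T' : Finset α) := by
          intro y hy; simp only [Finset.mem_coe] at hy ⊢; exact mem_insert_of_mem hy
        refine Finset.eq_of_subset_of_card_le hsub ?_
        rw [Finset.card_image_of_injOn (hinj.mono hmono)]
        rw [card_erase_of_mem hfa]
        omega
      · rintro ⟨s, hsS, hfa, h1, h2⟩
        refine ⟨?_, h2⟩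
        rw [Finset.image_insert, hfa, h1, insert_erase hsS]
    rw [hpart, Finset.sum_biUnion ?hd]
    case hd =>
      intro s hs t ht hst
      simp only [Function.onFun]
      refine Finset.disjoint_left.mpr ?_
      intro f hf1 hf2
      simp only [mem_filter] at hf1 hf2
      exact hst (hf1.2.1 ▸ hf2.2.1)
    have hinner : ∀ s ∈ S,
        ∑ f ∈ univ.filter (fun f : α → β =>
            f a = s ∧ T'.image f = S.erase s ∧ ∀ b ∉ insert a T', f b = b₀),
          ∏ j ∈ insert a T', x (f j)
        = x s * (((S.erase s).card.factorial : ℂ) * ∏ v ∈ S.erase s, x v) := by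
      intro s hsS
      have hbij : ∑ f ∈ univ.filter (fun f : α → β =>
            f a = s ∧ T'.image f = S.erase s ∧ ∀ b ∉ insert a T', f b = b₀),
          ∏ j ∈ T', x (f j)
        = ∑ g ∈ univ.filter (fun g : α → β =>
            T'.image g = S.erase s ∧ ∀ b ∉ T', g b = b₀),
          ∏ j ∈ T', x (g j) := by
        refine Finset.sum_bij' (fun f _ => Function.update f a b₀)
          (fun g _ => Function.update g a s) ?_ ?_ ?_ ?_ ?_
        · intro f hf
          simp only [mem_filter, mem_univ, true_and] at hf ⊢
          obtain ⟨hfa, h1, h2⟩ := hf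
          refine ⟨?_, ?_⟩
          · rw [← h1]
            refine Finset.image_congr ?_
            intro j hj
            exact Function.update_of_ne (ne_of_mem_of_not_mem hj ha) _ _
          · intro b hb
            by_cases hba : b = a
            · subst hba; simp
            · rw [Function.update_of_ne hba]
              exact h2 b (by simp [hba, hb])
        · intro g hg
          simp only [mem_filter, mem_univ, true_and] at hg ⊢
          obtain ⟨h1, h2⟩ := hg
          refine ⟨by simp, ?_, ?_⟩
          · rw [← h1]
            refine Finset.image_congr ?_
            intro j hj
            exact Function.update_of_ne (ne_of_mem_of_not_mem hj ha) _ _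
          · intro b hb
            simp only [mem_insert, not_or] at hb
            rw [Function.update_of_ne hb.1]
            exact h2 b hb.2
        · intro f hf
          simp only [mem_filter, mem_univ, true_and] at hf
          funext c
          by_cases hca : c = a
          · subst hca; simp [hf.1]
          · simp [Function.update_of_ne hca]
        · intro g hg
          simp only [mem_filter, mem_univ, true_and] at hg
          funext c
          by_cases hca : c = a
          · subst hca; simp [hg.2 _ ha]
          · simp [Function.update_of_ne hca]
        · intro f hf
          refine Finset.prod_congr rfl ?_
          intro j hj
          show x (f j) = x (Function.update f a b₀ j)
          rw [Function.update_of_ne (ne_of_mem_of_not_mem hj ha)]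
      calc ∑ f ∈ univ.filter (fun f : α → β =>
            f a = s ∧ T'.image f = S.erase s ∧ ∀ b ∉ insert a T', f b = b₀),
          ∏ j ∈ insert a T', x (f j)
          = ∑ f ∈ univ.filter (fun f : α → β =>
            f a = s ∧ T'.image f = S.erase s ∧ ∀ b ∉ insert a T', f b = b₀),
            x s * ∏ j ∈ T', x (f j) := by
            refine Finset.sum_congr rfl ?_
            intro f hf
            simp only [mem_filter, mem_univ, true_and] at hf
            rw [Finset.prod_insert ha, hf.1]
      _ = x s * ∑ f ∈ univ.filter (fun f : α → β =>
            f a = s ∧ T'.image f = S.erase s ∧ ∀ b ∉ insert a T', f b = b₀),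
            ∏ j ∈ T', x (f j) := by rw [Finset.mul_sum]
      _ = x s * (((S.erase s).card.factorial : ℂ) * ∏ v ∈ S.erase s, x v) := by
            rw [hbij, ih (S.erase s) (by rw [card_erase_of_mem hsS]; omega)]
    rw [Finset.sum_congr rfl hinner]
    have hkey : ∀ s ∈ S, x s * (((S.erase s).card.factorial : ℂ) * ∏ v ∈ S.erase s, x v)
        = (T'.card.factorial : ℂ) * ∏ v ∈ S, x v := by
      intro s hsS
      rw [card_erase_of_mem hsS, hScard]
      simp only [Nat.add_sub_cancel]
      rw [← mul_assoc, mul_comm (x s), mul_assoc, Finset.mul_prod_erase S x hsS]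
    rw [Finset.sum_congr rfl hkey, Finset.sum_const, nsmul_eq_mul]
    rw [hScard, Nat.factorial_succ]
    push_cast
    ring

open scoped Classical in
lemma mySum2 (x : β → ℂ) (b₀ : β) :
    ∀ (T₁ T₂ : Finset α) (S₁ S₂ : Finset β), Disjoint T₁ T₂ → Disjoint S₁ S₂ →
      T₁.card = S₁.card → T₂.card = S₂.card →
      ∑ f ∈ univ.filter (fun f : α → β =>
          T₁.image f = S₁ ∧ T₂.image f = S₂ ∧ ∀ a ∉ T₁ ∪ T₂, f a = b₀),
        ∏ j ∈ T₁ ∪ T₂, x (f j)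
      = ((S₁.card.factorial * S₂.card.factorial : ℕ) : ℂ) * ∏ v ∈ S₁ ∪ S₂, x v := by
  intro T₁
  induction T₁ using Finset.induction_on with
  | empty =>
    intro T₂ S₁ S₂ hT hS h₁ h₂
    have hSe : S₁ = ∅ := Finset.card_eq_zero.mp (by simpa using h₁.symm)
    subst hSe
    have hfil : (univ.filter (fun f : α → β =>
        (∅ : Finset α).image f = (∅ : Finset β) ∧ T₂.image f = S₂ ∧
          ∀ a ∉ (∅ : Finset α) ∪ T₂, f a = b₀))
        = univ.filter (fun f : α → β => T₂.image f = S₂ ∧ ∀ a ∉ T₂, f a = b₀) := by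
      refine Finset.filter_congr ?_
      intro f _
      simp
    rw [hfil]
    simp only [Finset.empty_union, Finset.card_empty, Nat.factorial_zero, one_mul]
    rw [mySum1 x b₀ T₂ S₂ h₂]
  | @insert a T' ha ih =>
    intro T₂ S₁ S₂ hT hS h₁ h₂
    have haT₂ : a ∉ T₂ := Finset.disjoint_left.mp hT (mem_insert_self a T')
    have hT' : Disjoint T' T₂ := hT.mono_left (Finset.subset_insert a T')
    have haU : a ∉ T' ∪ T₂ := by simp [ha, haT₂]
    have hScard : S₁.card = T'.card + 1 := by
      rw [← h₁, card_insert_of_notMem ha]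
    have hins : insert a T' ∪ T₂ = insert a (T' ∪ T₂) := Finset.insert_union a T' T₂
    have hpart : (univ.filter (fun f : α → β =>
        (insert a T').image f = S₁ ∧ T₂.image f = S₂ ∧ ∀ b ∉ insert a T' ∪ T₂, f b = b₀))
        = S₁.biUnion (fun s => univ.filter (fun f : α → β =>
            f a = s ∧ T'.image f = S₁.erase s ∧ T₂.image f = S₂ ∧
              ∀ b ∉ insert a T' ∪ T₂, f b = b₀)) := by
      ext f
      simp only [mem_filter, mem_univ, true_and, mem_biUnion]
      constructor
      · rintro ⟨h1, h2, h3⟩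
        have hfa : f a ∈ S₁ := h1 ▸ mem_image_of_mem f (mem_insert_self a T')
        have hinj : Set.InjOn f (insert a T' : Finset α) :=
          Finset.injOn_of_card_image_eq (by rw [h1, h₁])
        refine ⟨f a, hfa, rfl, ?_, h2, h3⟩
        have hsub : T'.image f ⊆ S₁.erase (f a) := by
          intro v hv
          obtain ⟨j, hj, rfl⟩ := mem_image.mp hv
          refine mem_erase.mpr ⟨?_, h1 ▸ mem_image_of_mem f (mem_insert_of_mem hj)⟩
          intro hEq
          exact ha (by
            have hje : j = a := hinj (by simp [hj]) (by simp) hEq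
            rwa [hje] at hj)
        have hmono : (T' : Set α) ⊆ (insert a T' : Finset α) := by
          intro y hy; simp only [Finset.mem_coe] at hy ⊢; exact mem_insert_of_mem hy
        refine Finset.eq_of_subset_of_card_le hsub ?_
        rw [Finset.card_image_of_injOn (hinj.mono hmono)]
        rw [card_erase_of_mem hfa]
        omega
      · rintro ⟨s, hsS, hfa, h1, h2, h3⟩
        refine ⟨?_, h2, h3⟩
        rw [Finset.image_insert, hfa, h1, insert_erase hsS]
    rw [hpart, Finset.sum_biUnion ?hd2]
    case hd2 =>
      intro s hs t ht hst
      simp only [Function.onFun]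
      refine Finset.disjoint_left.mpr ?_
      intro f hf1 hf2
      simp only [mem_filter] at hf1 hf2
      exact hst (hf1.2.1 ▸ hf2.2.1)
    have hinner : ∀ s ∈ S₁,
        ∑ f ∈ univ.filter (fun f : α → β =>
            f a = s ∧ T'.image f = S₁.erase s ∧ T₂.image f = S₂ ∧
              ∀ b ∉ insert a T' ∪ T₂, f b = b₀),
          ∏ j ∈ insert a T' ∪ T₂, x (f j)
        = x s * ((((S₁.erase s).card.factorial * S₂.card.factorial : ℕ) : ℂ) *
            ∏ v ∈ S₁.erase s ∪ S₂, x v) := by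
      intro s hsS
      have hbij : ∑ f ∈ univ.filter (fun f : α → β =>
            f a = s ∧ T'.image f = S₁.erase s ∧ T₂.image f = S₂ ∧
              ∀ b ∉ insert a T' ∪ T₂, f b = b₀),
          ∏ j ∈ T' ∪ T₂, x (f j)
        = ∑ g ∈ univ.filter (fun g : α → β =>
            T'.image g = S₁.erase s ∧ T₂.image g = S₂ ∧ ∀ b ∉ T' ∪ T₂, g b = b₀),
          ∏ j ∈ T' ∪ T₂, x (g j) := by
        refine Finset.sum_bij' (fun f _ => Function.update f a b₀)
          (fun g _ => Function.update g a s) ?_ ?_ ?_ ?_ ?_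
        · intro f hf
          simp only [mem_filter, mem_univ, true_and] at hf ⊢
          obtain ⟨hfa, h1, h2, h3⟩ := hf
          refine ⟨?_, ?_, ?_⟩
          · rw [← h1]
            refine Finset.image_congr ?_
            intro j hj
            exact Function.update_of_ne (ne_of_mem_of_not_mem hj ha) _ _
          · rw [← h2]
            refine Finset.image_congr ?_
            intro j hj
            exact Function.update_of_ne (ne_of_mem_of_not_mem hj haT₂) _ _
          · intro b hb
            by_cases hba : b = a
            · subst hba; simp
            · rw [Function.update_of_ne hba]
              refine h3 b ?_
              rw [hins]
              simp [hba, hb]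
        · intro g hg
          simp only [mem_filter, mem_univ, true_and] at hg ⊢
          obtain ⟨h1, h2, h3⟩ := hg
          refine ⟨by simp, ?_, ?_, ?_⟩
          · rw [← h1]
            refine Finset.image_congr ?_
            intro j hj
            exact Function.update_of_ne (ne_of_mem_of_not_mem hj ha) _ _
          · rw [← h2]
            refine Finset.image_congr ?_
            intro j hj
            exact Function.update_of_ne (ne_of_mem_of_not_mem hj haT₂) _ _
          · intro b hb
            rw [hins] at hb
            simp only [mem_insert, not_or] at hb
            rw [Function.update_of_ne hb.1]
            exact h3 b (by simp [hb.2])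
        · intro f hf
          simp only [mem_filter, mem_univ, true_and] at hf
          funext c
          by_cases hca : c = a
          · subst hca; simp [hf.1]
          · simp [Function.update_of_ne hca]
        · intro g hg
          simp only [mem_filter, mem_univ, true_and] at hg
          funext c
          by_cases hca : c = a
          · subst hca; simp [hg.2.2 _ haU]
          · simp [Function.update_of_ne hca]
        · intro f hf
          refine Finset.prod_congr rfl ?_
          intro j hj
          show x (f j) = x (Function.update f a b₀ j)
          rw [Function.update_of_ne (ne_of_mem_of_not_mem hj haU)]
      calc ∑ f ∈ univ.filter (fun f : α → β =>
            f a = s ∧ T'.image f = S₁.erase s ∧ T₂.image f = S₂ ∧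
              ∀ b ∉ insert a T' ∪ T₂, f b = b₀),
          ∏ j ∈ insert a T' ∪ T₂, x (f j)
          = ∑ f ∈ univ.filter (fun f : α → β =>
            f a = s ∧ T'.image f = S₁.erase s ∧ T₂.image f = S₂ ∧
              ∀ b ∉ insert a T' ∪ T₂, f b = b₀),
            x s * ∏ j ∈ T' ∪ T₂, x (f j) := by
            refine Finset.sum_congr rfl ?_
            intro f hf
            simp only [mem_filter, mem_univ, true_and] at hf
            rw [hins, Finset.prod_insert haU, hf.1]
      _ = x s * ∑ f ∈ univ.filter (fun f : α → β =>
            f a = s ∧ T'.image f = S₁.erase s ∧ T₂.image f = S₂ ∧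
              ∀ b ∉ insert a T' ∪ T₂, f b = b₀),
            ∏ j ∈ T' ∪ T₂, x (f j) := by rw [Finset.mul_sum]
      _ = x s * ((((S₁.erase s).card.factorial * S₂.card.factorial : ℕ) : ℂ) *
            ∏ v ∈ S₁.erase s ∪ S₂, x v) := by
            rw [hbij, ih T₂ (S₁.erase s) S₂ hT' (hS.mono_left (erase_subset s S₁))
              (by rw [card_erase_of_mem hsS]; omega) h₂]
    rw [Finset.sum_congr rfl hinner]
    have hkey : ∀ s ∈ S₁,
        x s * ((((S₁.erase s).card.factorial * S₂.card.factorial : ℕ) : ℂ) *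
            ∏ v ∈ S₁.erase s ∪ S₂, x v)
        = ((T'.card.factorial * S₂.card.factorial : ℕ) : ℂ) * (∏ v ∈ (S₁ ∪ S₂).erase s, x v) * x s := by
      intro s hsS
      have hsS₂ : s ∉ S₂ := Finset.disjoint_left.mp hS hsS
      have hUe : S₁.erase s ∪ S₂ = (S₁ ∪ S₂).erase s := by
        rw [Finset.erase_union_distrib, Finset.erase_eq_of_notMem hsS₂]
      rw [hUe, card_erase_of_mem hsS, hScard]
      simp only [Nat.add_sub_cancel]
      ring
    rw [Finset.sum_congr rfl hkey]
    have hprod : ∀ s ∈ S₁, (∏ v ∈ (S₁ ∪ S₂).erase s, x v) * x s = ∏ v ∈ S₁ ∪ S₂, x v := by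
      intro s hsS
      rw [mul_comm, Finset.mul_prod_erase (S₁ ∪ S₂) x (mem_union_left _ hsS)]
    calc ∑ s ∈ S₁, (((T'.card.factorial * S₂.card.factorial : ℕ) : ℂ) *
          ∏ v ∈ (S₁ ∪ S₂).erase s, x v) * x s
        = ∑ s ∈ S₁, ((T'.card.factorial * S₂.card.factorial : ℕ) : ℂ) *
          ∏ v ∈ S₁ ∪ S₂, x v := by
          refine Finset.sum_congr rfl ?_
          intro s hsS
          rw [mul_assoc, hprod s hsS]
      _ = ((S₁.card.factorial * S₂.card.factorial : ℕ) : ℂ) * ∏ v ∈ S₁ ∪ S₂, x v := by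
          rw [Finset.sum_const, nsmul_eq_mul, hScard, Nat.factorial_succ]
          push_cast
          ring

open scoped Classical in
lemma blockSum (z : α) (i : β) (A : Finset α) (hz : z ∈ A) (S₁ S₂ : Finset β)
    (hS : Disjoint S₁ S₂) (h₁ : A.card = S₁.card) (h₂ : Aᶜ.card = S₂.card) (x : β → ℂ) :
    ∑ f ∈ univ.filter (fun f : α → β => f z = i),
      (if A.image f = S₁ ∧ Aᶜ.image f = S₂ then (1 : ℂ) else 0) *
        ∏ j ∈ univ.filter (fun j => j ≠ z), x (f j)
    = if i ∈ S₁ then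
        (((S₁.card - 1).factorial * S₂.card.factorial : ℕ) : ℂ) *
          ∏ v ∈ (S₁ ∪ S₂).erase i, x v
      else 0 := by
  by_cases hi : i ∈ S₁
  · rw [if_pos hi]
    have hstep : ∀ f ∈ univ.filter (fun f : α → β => f z = i),
        (if A.image f = S₁ ∧ Aᶜ.image f = S₂ then (1 : ℂ) else 0) *
          ∏ j ∈ univ.filter (fun j => j ≠ z), x (f j)
        = if A.image f = S₁ ∧ Aᶜ.image f = S₂ then
            ∏ j ∈ univ.filter (fun j => j ≠ z), x (f j) else 0 := by
      intro f _
      split <;> simp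
    rw [Finset.sum_congr rfl hstep, ← Finset.sum_filter, Finset.filter_filter]
    have hzc : z ∉ Aᶜ := by simp [hz]
    have hU : (A.erase z) ∪ Aᶜ = univ.filter (fun j => j ≠ z) := by
      ext j
      simp only [mem_union, mem_erase, mem_compl, mem_filter, mem_univ, true_and]
      constructor
      · rintro (⟨hjz, _⟩ | hjA)
        · exact hjz
        · exact fun h => hjA (h ▸ hz)
      · intro hjz
        by_cases hjA : j ∈ A
        · exact Or.inl ⟨hjz, hjA⟩
        · exact Or.inr hjA
    have hiS₂ : i ∉ S₂ := Finset.disjoint_left.mp hS hi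
    have hfil : (univ.filter (fun f : α → β =>
        f z = i ∧ A.image f = S₁ ∧ Aᶜ.image f = S₂))
        = univ.filter (fun f : α → β =>
            (A.erase z).image f = S₁.erase i ∧ Aᶜ.image f = S₂ ∧
              ∀ a ∉ (A.erase z) ∪ Aᶜ, f a = i) := by
      ext f
      simp only [mem_filter, mem_univ, true_and]
      constructor
      · rintro ⟨hfz, h1, h2⟩
        have hinjA : Set.InjOn f A := Finset.injOn_of_card_image_eq (by rw [h1, h₁])
        refine ⟨?_, h2, ?_⟩
        · have hsub : (A.erase z).image f ⊆ S₁.erase i := by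
            intro v hv
            obtain ⟨j, hj, rfl⟩ := mem_image.mp hv
            have hjA : j ∈ A := mem_of_mem_erase hj
            refine mem_erase.mpr ⟨?_, h1 ▸ mem_image_of_mem f hjA⟩
            intro hEq
            have hjz : j = z := hinjA (by simpa using hjA) (by simpa using hz)
              (by rw [hEq, hfz])
            exact (mem_erase.mp hj).1 hjz
          refine Finset.eq_of_subset_of_card_le hsub ?_
          have hmono : ((A.erase z : Finset α) : Set α) ⊆ (A : Set α) := by
            intro y hy
            simp only [Finset.mem_coe] at hy ⊢
            exact mem_of_mem_erase hy
          rw [Finset.card_image_of_injOn (hinjA.mono hmono)]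
          rw [card_erase_of_mem hi, card_erase_of_mem hz]
          omega
        · intro a haU
          simp only [mem_union, mem_erase, mem_compl, not_or, not_and, not_not] at haU
          have haA : a ∈ A := haU.2
          have haz : a = z := by
            by_contra hne
            exact (haU.1 hne) haA
          rw [haz, hfz]
      · rintro ⟨g1, g2, g3⟩
        have hzU : z ∉ (A.erase z) ∪ Aᶜ := by simp [hz]
        have hfz : f z = i := g3 z hzU
        refine ⟨hfz, ?_, g2⟩
        have hA : A = insert z (A.erase z) := (insert_erase hz).symm
        rw [hA, Finset.image_insert, hfz, g1, insert_erase hi]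
    rw [hfil, ← hU]
    rw [mySum2 x i (A.erase z) Aᶜ (S₁.erase i) S₂
      (disjoint_compl_right.mono_left (erase_subset z A))
      (hS.mono_left (erase_subset i S₁))
      (by rw [card_erase_of_mem hz, card_erase_of_mem hi, h₁]) h₂]
    rw [card_erase_of_mem hi]
    have hUe : S₁.erase i ∪ S₂ = (S₁ ∪ S₂).erase i := by
      rw [Finset.erase_union_distrib, Finset.erase_eq_of_notMem hiS₂]
    rw [hUe]
  · rw [if_neg hi]
    refine Finset.sum_eq_zero ?_
    intro f hf
    simp only [mem_filter, mem_univ, true_and] at hf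
    have : ¬(A.image f = S₁ ∧ Aᶜ.image f = S₂) := by
      rintro ⟨h1, _⟩
      exact hi (h1 ▸ hf ▸ mem_image_of_mem f hz)
    rw [if_neg this, zero_mul]

end Helpers

section CardFin
open Finset

lemma cardFilterLt (m t : ℕ) (h : t ≤ m) :
    (univ.filter fun j : Fin m => (j : ℕ) < t).card = t := by
  have he : (univ.filter fun j : Fin m => (j : ℕ) < t)
      = Finset.attachFin (Finset.range t)
        (fun x hx => lt_of_lt_of_le (Finset.mem_range.mp hx) h) := by
    ext j
    simp [Finset.mem_attachFin]
  rw [he, Finset.card_attachFin, Finset.card_range]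

lemma filterGeEqCompl (m t : ℕ) :
    (univ.filter fun j : Fin m => t ≤ (j : ℕ))
      = (univ.filter fun j : Fin m => (j : ℕ) < t)ᶜ := by
  ext j
  simp [not_lt]

end CardFin


section MainHelpers
open Finset

variable {m n : ℕ}

lemma hmApplyC_addA (hm : 0 < m) (A B : (Fin m → Fin n) → ℝ) (x : Fin n → ℂ) (i : Fin n) :
    hmApplyC hm (fun f => A f + B f) x i = hmApplyC hm A x i + hmApplyC hm B x i := by
  unfold hmApplyC
  rw [← Finset.sum_add_distrib]
  refine Finset.sum_congr rfl ?_
  intro f _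
  push_cast
  ring

lemma hmApplyC_subA (hm : 0 < m) (A B : (Fin m → Fin n) → ℝ) (x : Fin n → ℂ) (i : Fin n) :
    hmApplyC hm (fun f => A f - B f) x i = hmApplyC hm A x i - hmApplyC hm B x i := by
  unfold hmApplyC
  rw [← Finset.sum_sub_distrib]
  refine Finset.sum_congr rfl ?_
  intro f _
  push_cast
  ring

lemma deg_add (H : DirHypergraph n) (v : Fin n) :
    outDeg H v + inDeg H v = undDeg H v := by
  unfold outDeg inDeg undDeg
  have hfil : H.edges.filter (fun e => v ∈ e.1 ∪ e.2)
      = H.edges.filter (fun e => v ∈ e.1) ∪ H.edges.filter (fun e => v ∈ e.2) := by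
    rw [← Finset.filter_or]
    refine Finset.filter_congr ?_
    intro e _
    simp [Finset.mem_union]
  rw [hfil, Finset.card_union_of_disjoint]
  refine Finset.disjoint_filter.mpr ?_
  intro e he h1 h2
  exact (Finset.disjoint_left.mp (H.tail_head_disjoint e he) h1) h2

lemma diag_add (H : DirHypergraph n) (f : Fin m → Fin n) :
    diagHM m (fun v => (outDeg H v : ℝ)) f + diagHM m (fun v => (inDeg H v : ℝ)) f
      = diagHM m (fun v => (undDeg H v : ℝ)) f := by
  unfold diagHM
  rw [← Finset.sum_add_distrib]
  refine Finset.sum_congr rfl ?_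
  intro v _
  by_cases h : f = fun _ => v
  · simp only [if_pos h]
    rw [← deg_add]
    push_cast
    ring
  · simp [h]

lemma expandEdges (hm : 0 < m) (H : DirHypergraph n)
    (w : Finset (Fin n) × Finset (Fin n) → ℝ)
    (P : (Finset (Fin n) × Finset (Fin n)) → (Fin m → Fin n) → Prop)
    [inst : ∀ e f, Decidable (P e f)] (x : Fin n → ℂ) (i : Fin n) :
    ∑ f ∈ univ.filter (fun f : Fin m → Fin n => f ⟨0, hm⟩ = i),
      ((∑ e ∈ H.edges, if P e f then w e else 0 : ℝ) : ℂ) *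
        ∏ j ∈ univ.filter (fun j : Fin m => j ≠ ⟨0, hm⟩), x (f j)
    = ∑ e ∈ H.edges, (w e : ℂ) *
        ∑ f ∈ univ.filter (fun f : Fin m → Fin n => f ⟨0, hm⟩ = i),
          (if P e f then (1 : ℂ) else 0) *
            ∏ j ∈ univ.filter (fun j : Fin m => j ≠ ⟨0, hm⟩), x (f j) := by
  have h1 : ∀ f : Fin m → Fin n,
      ((∑ e ∈ H.edges, if P e f then w e else 0 : ℝ) : ℂ)
        = ∑ e ∈ H.edges, (if P e f then (w e : ℂ) else 0) := by
    intro f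
    push_cast
    refine Finset.sum_congr rfl ?_
    intro e _
    split <;> simp
  simp only [h1, Finset.sum_mul]
  rw [Finset.sum_comm]
  refine Finset.sum_congr rfl ?_
  intro e _
  rw [Finset.mul_sum]
  refine Finset.sum_congr rfl ?_
  intro f _
  split <;> simp

lemma edgeOut (hm : 0 < m) (H : DirHypergraph n) (hH : H.IsUniform m)
    (x : Fin n → ℂ) (i : Fin n) (e : Finset (Fin n) × Finset (Fin n)) (he : e ∈ H.edges) :
    ∑ f ∈ univ.filter (fun f : Fin m → Fin n => f ⟨0, hm⟩ = i),
      (if ((univ.filter fun j : Fin m => (j : ℕ) < e.1.card).image f = e.1 ∧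
          (univ.filter fun j : Fin m => e.1.card ≤ (j : ℕ)).image f = e.2)
        then (1 : ℂ) else 0) *
        ∏ j ∈ univ.filter (fun j : Fin m => j ≠ ⟨0, hm⟩), x (f j)
    = if i ∈ e.1 then
        (((e.1.card - 1).factorial * (m - e.1.card).factorial : ℕ) : ℂ) *
          ∏ v ∈ (e.1 ∪ e.2).erase i, x v
      else 0 := by
  have hk : 1 ≤ e.1.card := Finset.card_pos.mpr (H.tail_nonempty e he)
  have hl : 1 ≤ e.2.card := Finset.card_pos.mpr (H.head_nonempty e he)
  have hd := H.tail_head_disjoint e he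
  have hkl : e.1.card + e.2.card = m := by
    rw [← Finset.card_union_of_disjoint hd]; exact hH e he
  have hA1 : (univ.filter fun j : Fin m => (j : ℕ) < e.1.card).card = e.1.card :=
    cardFilterLt m e.1.card (by omega)
  have hz : (⟨0, hm⟩ : Fin m) ∈ univ.filter fun j : Fin m => (j : ℕ) < e.1.card := by
    simp only [mem_filter, mem_univ, true_and]
    omega
  have hA2 : (univ.filter fun j : Fin m => (j : ℕ) < e.1.card)ᶜ.card = e.2.card := by
    rw [Finset.card_compl, hA1, Fintype.card_fin]
    omega
  simp only [filterGeEqCompl m e.1.card]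
  have hres := blockSum (⟨0, hm⟩ : Fin m) i _ hz e.1 e.2 hd hA1 hA2 x
  rw [hres]
  have h2c : e.2.card = m - e.1.card := by omega
  rw [h2c]

lemma edgeIn (hm : 0 < m) (H : DirHypergraph n) (hH : H.IsUniform m)
    (x : Fin n → ℂ) (i : Fin n) (e : Finset (Fin n) × Finset (Fin n)) (he : e ∈ H.edges) :
    ∑ f ∈ univ.filter (fun f : Fin m → Fin n => f ⟨0, hm⟩ = i),
      (if ((univ.filter fun j : Fin m => (j : ℕ) < m - e.1.card).image f = e.2 ∧
          (univ.filter fun j : Fin m => m - e.1.card ≤ (j : ℕ)).image f = e.1)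
        then (1 : ℂ) else 0) *
        ∏ j ∈ univ.filter (fun j : Fin m => j ≠ ⟨0, hm⟩), x (f j)
    = if i ∈ e.2 then
        (((m - e.1.card - 1).factorial * e.1.card.factorial : ℕ) : ℂ) *
          ∏ v ∈ (e.1 ∪ e.2).erase i, x v
      else 0 := by
  have hk : 1 ≤ e.1.card := Finset.card_pos.mpr (H.tail_nonempty e he)
  have hl : 1 ≤ e.2.card := Finset.card_pos.mpr (H.head_nonempty e he)
  have hd := H.tail_head_disjoint e he
  have hkl : e.1.card + e.2.card = m := by
    rw [← Finset.card_union_of_disjoint hd]; exact hH e he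
  have hA1 : (univ.filter fun j : Fin m => (j : ℕ) < m - e.1.card).card = e.2.card := by
    rw [cardFilterLt m (m - e.1.card) (by omega)]
    omega
  have hz : (⟨0, hm⟩ : Fin m) ∈ univ.filter fun j : Fin m => (j : ℕ) < m - e.1.card := by
    simp only [mem_filter, mem_univ, true_and]
    omega
  have hA2 : (univ.filter fun j : Fin m => (j : ℕ) < m - e.1.card)ᶜ.card = e.1.card := by
    rw [Finset.card_compl, cardFilterLt m (m - e.1.card) (by omega), Fintype.card_fin]
    omega
  simp only [filterGeEqCompl m (m - e.1.card)]
  have hres := blockSum (⟨0, hm⟩ : Fin m) i _ hz e.2 e.1 hd.symm hA1 hA2 x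
  rw [hres]
  have h2c : e.2.card - 1 = m - e.1.card - 1 := by omega
  rw [h2c, Finset.union_comm e.2 e.1]

lemma edgeUnd (hm : 0 < m) (H : DirHypergraph n) (hH : H.IsUniform m)
    (x : Fin n → ℂ) (i : Fin n) (e : Finset (Fin n) × Finset (Fin n)) (he : e ∈ H.edges) :
    ∑ f ∈ univ.filter (fun f : Fin m → Fin n => f ⟨0, hm⟩ = i),
      (if (Function.Injective f ∧ Finset.univ.image f = e.1 ∪ e.2)
        then (1 : ℂ) else 0) *
        ∏ j ∈ univ.filter (fun j : Fin m => j ≠ ⟨0, hm⟩), x (f j)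
    = if i ∈ e.1 ∪ e.2 then
        (((m - 1).factorial : ℕ) : ℂ) * ∏ v ∈ (e.1 ∪ e.2).erase i, x v
      else 0 := by
  have hcard : (e.1 ∪ e.2).card = m := hH e he
  have hiff : ∀ f : Fin m → Fin n,
      (Function.Injective f ∧ Finset.univ.image f = e.1 ∪ e.2)
        ↔ ((univ : Finset (Fin m)).image f = e.1 ∪ e.2 ∧
            (univ : Finset (Fin m))ᶜ.image f = (∅ : Finset (Fin n))) := by
    intro f
    constructor
    · rintro ⟨_, h⟩
      exact ⟨h, by simp⟩
    · rintro ⟨h, _⟩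
      refine ⟨?_, h⟩
      have hinj : Set.InjOn f ((univ : Finset (Fin m)) : Set (Fin m)) :=
        Finset.injOn_of_card_image_eq (by
          rw [h, hcard, Finset.card_univ, Fintype.card_fin])
      rw [Finset.coe_univ] at hinj
      exact Set.injOn_univ.mp hinj
  simp only [hiff]
  have hz : (⟨0, hm⟩ : Fin m) ∈ (univ : Finset (Fin m)) := mem_univ _
  have h₁ : (univ : Finset (Fin m)).card = (e.1 ∪ e.2).card := by
    rw [hcard, Finset.card_univ, Fintype.card_fin]
  have h₂ : (univ : Finset (Fin m))ᶜ.card = (∅ : Finset (Fin n)).card := by simp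
  have hres := blockSum (⟨0, hm⟩ : Fin m) i (univ : Finset (Fin m)) hz (e.1 ∪ e.2)
    (∅ : Finset (Fin n)) (Finset.disjoint_empty_right _) h₁ h₂ x
  rw [hres, hcard]
  simp [Nat.factorial]

lemma adjSum (hm : 0 < m) (H : DirHypergraph n) (hH : H.IsUniform m)
    (x : Fin n → ℂ) (i : Fin n) :
    hmApplyC hm (outAdj m H) x i + hmApplyC hm (inAdj m H) x i
      = hmApplyC hm (undAdj m H) x i := by
  unfold hmApplyC outAdj inAdj undAdj
  rw [expandEdges hm H
    (fun e => (1 : ℝ) / ((((m - e.1.card).factorial * (e.1.card - 1).factorial : ℕ)) : ℝ))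
    (fun e f => ((Finset.univ.filter fun j : Fin m => (j : ℕ) < e.1.card).image f = e.1 ∧
        (Finset.univ.filter fun j : Fin m => e.1.card ≤ (j : ℕ)).image f = e.2)) x i]
  rw [expandEdges hm H
    (fun e => (1 : ℝ) / ((((m - e.1.card - 1).factorial * (e.1.card).factorial : ℕ)) : ℝ))
    (fun e f => ((Finset.univ.filter fun j : Fin m => (j : ℕ) < m - e.1.card).image f = e.2 ∧
        (Finset.univ.filter fun j : Fin m => m - e.1.card ≤ (j : ℕ)).image f = e.1)) x i]
  rw [expandEdges hm H
    (fun _ => (1 : ℝ) / (((m - 1).factorial : ℕ) : ℝ))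
    (fun e f => (Function.Injective f ∧ Finset.univ.image f = e.1 ∪ e.2)) x i]
  rw [← Finset.sum_add_distrib]
  refine Finset.sum_congr rfl ?_
  intro e he
  rw [edgeOut hm H hH x i e he, edgeIn hm H hH x i e he, edgeUnd hm H hH x i e he]
  have hk : 1 ≤ e.1.card := Finset.card_pos.mpr (H.tail_nonempty e he)
  have hl : 1 ≤ e.2.card := Finset.card_pos.mpr (H.head_nonempty e he)
  have hd := H.tail_head_disjoint e he
  have hkl : e.1.card + e.2.card = m := by
    rw [← Finset.card_union_of_disjoint hd]; exact hH e he
  have hN1 : (((m - e.1.card).factorial * (e.1.card - 1).factorial : ℕ) : ℂ) ≠ 0 := by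
    exact_mod_cast Nat.mul_ne_zero (Nat.factorial_ne_zero _) (Nat.factorial_ne_zero _)
  have hN2 : (((m - e.1.card - 1).factorial * (e.1.card).factorial : ℕ) : ℂ) ≠ 0 := by
    exact_mod_cast Nat.mul_ne_zero (Nat.factorial_ne_zero _) (Nat.factorial_ne_zero _)
  have hN3 : (((m - 1).factorial : ℕ) : ℂ) ≠ 0 := by
    exact_mod_cast Nat.factorial_ne_zero _
  by_cases h1 : i ∈ e.1
  · have h2 : i ∉ e.2 := Finset.disjoint_left.mp hd h1
    have h3 : i ∈ e.1 ∪ e.2 := Finset.mem_union_left _ h1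
    rw [if_pos h1, if_neg h2, if_pos h3]
    push_cast at hN1 hN2 hN3 ⊢
    field_simp [Nat.factorial_ne_zero]
    try ring
  · by_cases h2 : i ∈ e.2
    · have h3 : i ∈ e.1 ∪ e.2 := Finset.mem_union_right _ h2
      rw [if_neg h1, if_pos h2, if_pos h3]
      push_cast at hN1 hN2 hN3 ⊢
      field_simp [Nat.factorial_ne_zero]
      try ring
    · have h3 : i ∉ e.1 ∪ e.2 := by
        simp [Finset.mem_union, h1, h2]
      rw [if_neg h1, if_neg h2, if_neg h3]
      simp

end MainHelpers

/-- For a directed `m`-uniform hypergraph `H`, the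
Laplacian `L_H = L_H⁺ + L_H⁻` is isospectral with the Laplacian
`L_{H_D} = D_{H_D} - A_{H_D}` of the underlying undirected hypergraph, and the
signless Laplacian `𝕃_H = 𝕃_H⁺ + 𝕃_H⁻` is isospectral with
`𝕃_{H_D} = D_{H_D} + A_{H_D}`. -/
theorem laplacian_isospectral_und {m n : ℕ} (hm : 0 < m)
    (H : DirHypergraph n) (hH : H.IsUniform m) :
    (∀ lam : ℂ,
      IsEigenvalue hm
        (fun f => (diagHM m (fun v => (outDeg H v : ℝ)) f - outAdj m H f) +
          (diagHM m (fun v => (inDeg H v : ℝ)) f - inAdj m H f)) lam ↔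
      IsEigenvalue hm
        (fun f => diagHM m (fun v => (undDeg H v : ℝ)) f - undAdj m H f) lam) ∧
    (∀ lam : ℂ,
      IsEigenvalue hm
        (fun f => (diagHM m (fun v => (outDeg H v : ℝ)) f + outAdj m H f) +
          (diagHM m (fun v => (inDeg H v : ℝ)) f + inAdj m H f)) lam ↔
      IsEigenvalue hm
        (fun f => diagHM m (fun v => (undDeg H v : ℝ)) f + undAdj m H f) lam) := by
  have hdiag : ∀ (x : Fin n → ℂ) (i : Fin n),
      hmApplyC hm (diagHM m (fun v => (outDeg H v : ℝ))) x i +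
        hmApplyC hm (diagHM m (fun v => (inDeg H v : ℝ))) x i
      = hmApplyC hm (diagHM m (fun v => (undDeg H v : ℝ))) x i := by
    intro x i
    rw [← hmApplyC_addA]
    congr 1
    funext f
    exact diag_add H f
  have keyL : ∀ (x : Fin n → ℂ) (i : Fin n),
      hmApplyC hm (fun f => (diagHM m (fun v => (outDeg H v : ℝ)) f - outAdj m H f) +
          (diagHM m (fun v => (inDeg H v : ℝ)) f - inAdj m H f)) x i
      = hmApplyC hm (fun f => diagHM m (fun v => (undDeg H v : ℝ)) f - undAdj m H f) x i := by
    intro x i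
    rw [hmApplyC_addA, hmApplyC_subA, hmApplyC_subA, hmApplyC_subA]
    have h2 := adjSum hm H hH x i
    have h1 := hdiag x i
    linear_combination h1 - h2
  have keyQ : ∀ (x : Fin n → ℂ) (i : Fin n),
      hmApplyC hm (fun f => (diagHM m (fun v => (outDeg H v : ℝ)) f + outAdj m H f) +
          (diagHM m (fun v => (inDeg H v : ℝ)) f + inAdj m H f)) x i
      = hmApplyC hm (fun f => diagHM m (fun v => (undDeg H v : ℝ)) f + undAdj m H f) x i := by
    intro x i
    rw [hmApplyC_addA, hmApplyC_addA, hmApplyC_addA, hmApplyC_addA]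
    have h2 := adjSum hm H hH x i
    have h1 := hdiag x i
    linear_combination h1 + h2
  constructor
  · intro lam
    constructor
    · rintro ⟨x, hx, hev⟩
      exact ⟨x, hx, fun i => by rw [← keyL x i]; exact hev i⟩
    · rintro ⟨x, hx, hev⟩
      exact ⟨x, hx, fun i => by rw [keyL x i]; exact hev i⟩
  · intro lam
    constructor
    · rintro ⟨x, hx, hev⟩
      exact ⟨x, hx, fun i => by rw [← keyQ x i]; exact hev i⟩
    · rintro ⟨x, hx, hev⟩
      exact ⟨x, hx, fun i => by rw [keyQ x i]; exact hev i⟩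
end
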